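/- arXiv:2411.08084 — 6 statements merged into one kernel-verified Lean document; each statement's English description precedes it below -/
import Mathlib

section
/- Let P be the first-return map of the Collatz map on N1 ∪ N2, H a complex Hilbert space with orthonormal basis {e_n}_{n ∈ N1∪N2}, T1, T2 the bounded operators with T1 e_n = e_{P(n)} for n ∈ N1, T1 e_n = 0 for n ∈ N2, T2 e_n = e_{P(n)} for n ∈ N2, T2 e_n = 0 for n ∈ N1, and S1 = T1*T2*, S2 = T2*. Then the following are equivalent: (i) there exists n ∈ N1 ∪ N2 such that e_n is a cyclic vector for C*(S1,S2); (ii) the Collatz conjecture holds. -/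
/-- The Collatz map on positive integers: `3n+1` for odd `n`, `n/2` for even `n`. -/
def collatz (n : ℕ+) : ℕ+ :=
  if h : (n : ℕ) % 2 = 1 then 3 * n + 1
  else ⟨(n : ℕ) / 2, by
    have h2 : 0 < n.1 := n.2
    have h3 : ¬ n.1 % 2 = 1 := h
    show 0 < n.1 / 2
    omega⟩

/-- The forward orbit of `x` under `f`. -/
def orbit {X : Type*} (f : X → X) (x : X) : Set X := Set.range fun k => f^[k] x

/-- The orbit equivalence relation induced by `f`: `x ~ y` iff the orbits meet. -/
def orbEquiv {X : Type*} (f : X → X) (x y : X) : Prop :=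
  (orbit f x ∩ orbit f y).Nonempty

/-- `N₁ = {n : n ≡ 1, 5 (mod 6)}`. -/
def N1 : Set ℕ+ := {n : ℕ+ | (n : ℕ) % 6 = 1 ∨ (n : ℕ) % 6 = 5}

/-- `N₂ = {n : n ≡ 4, 16 (mod 18)}`. -/
def N2 : Set ℕ+ := {n : ℕ+ | (n : ℕ) % 18 = 4 ∨ (n : ℕ) % 18 = 16}

/-- `y` is the first return of `x` to `S` under iteration of `f`: for some `k ≥ 1`,
`y = f^[k] x ∈ S` and no earlier positive iterate of `x` lies in `S`. -/
def IsFirstReturn {X : Type*} (f : X → X) (S : Set X) (x y : X) : Prop :=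
  ∃ k : ℕ, 0 < k ∧ f^[k] x ∈ S ∧ y = f^[k] x ∧ ∀ j : ℕ, 0 < j → j < k → f^[j] x ∉ S

/-- The C*-algebra of operators generated by a set `S` of bounded operators on a complex
Hilbert space: the closure of the (non-unital) star subalgebra generated by `S`. -/
noncomputable def CstarGen {H : Type*} [NormedAddCommGroup H] [InnerProductSpace ℂ H]
    [CompleteSpace H] (S : Set (H →L[ℂ] H)) : Set (H →L[ℂ] H) :=
  closure (NonUnitalStarAlgebra.adjoin ℂ S : Set (H →L[ℂ] H))

set_option linter.unusedSectionVars false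

namespace CollatzAux

lemma N1_odd {n : ℕ+} (h : n ∈ N1) : (n : ℕ) % 2 = 1 := by
  rcases h with h | h <;> omega

lemma N2_even {n : ℕ+} (h : n ∈ N2) : (n : ℕ) % 2 = 0 := by
  rcases h with h | h <;> omega

lemma N2_mod3 {n : ℕ+} (h : n ∈ N2) : (n : ℕ) % 3 = 1 := by
  rcases h with h | h <;> omega

lemma disj {x w : ℕ+} (hx : x ∈ N1) (hw : w ∈ N2) : x ≠ w := by
  intro h; subst h
  have := N1_odd hx; have := N2_even hw; omega

lemma collatz_odd_val (n : ℕ+) (h : (n : ℕ) % 2 = 1) :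
    ((collatz n : ℕ+) : ℕ) = 3 * (n : ℕ) + 1 := by
  unfold collatz
  refine (congrArg PNat.val (dif_pos h)).trans ?_
  push_cast
  ring

lemma collatz_even_val (n : ℕ+) (h : (n : ℕ) % 2 = 0) :
    ((collatz n : ℕ+) : ℕ) = (n : ℕ) / 2 := by
  unfold collatz
  refine (congrArg PNat.val (dif_neg (show ¬ (n : ℕ) % 2 = 1 by omega))).trans ?_
  rfl

lemma mem_N1_of (n : ℕ+) (h2 : (n : ℕ) % 2 = 1) (h3 : ¬ (n : ℕ) % 3 = 0) : n ∈ N1 := by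
  have : (n : ℕ) % 6 = 1 ∨ (n : ℕ) % 6 = 5 := by omega
  exact this

lemma N1_step {n : ℕ+} (h : n ∈ N1) : collatz n ∈ N2 := by
  have hv := collatz_odd_val n (N1_odd h)
  have : ((collatz n : ℕ+) : ℕ) % 18 = 4 ∨ ((collatz n : ℕ+) : ℕ) % 18 = 16 := by
    rcases h with h | h <;> omega
  exact this

lemma firstReturn_unique {X : Type*} {f : X → X} {S : Set X} {x y y' : X}
    (h : IsFirstReturn f S x y) (h' : IsFirstReturn f S x y') : y = y' := by
  obtain ⟨k, hk, hmem, heq, hmin⟩ := h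
  obtain ⟨k', hk', hmem', heq', hmin'⟩ := h'
  have : k = k' := by
    rcases lt_trichotomy k k' with h | h | h
    · exact absurd hmem (hmin' k hk h)
    · exact h
    · exact absurd hmem' (hmin k' hk' h)
  subst this
  rw [heq, heq']

lemma halving (x : ℕ+) (h3 : ¬ (x : ℕ) % 3 = 0) (hev : (x : ℕ) % 2 = 0) (k : ℕ)
    (hS : ∀ j, 0 < j → j < k → collatz^[j] x ∉ N1 ∪ N2) :
    ∀ j, j ≤ k → ((collatz^[j] x : ℕ+) : ℕ) * 2 ^ j = (x : ℕ) := by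
  intro j hj
  induction j with
  | zero => simp
  | succ j ih =>
    have hj' : j ≤ k := by omega
    have hprev := ih (by omega)
    set c := ((collatz^[j] x : ℕ+) : ℕ) with hc
    have hcpos : 0 < c := (collatz^[j] x).2
    have hc3 : ¬ c % 3 = 0 := by
      intro h
      apply h3
      rw [← hprev, Nat.mul_mod, h, Nat.zero_mul, Nat.zero_mod]
    have hceven : c % 2 = 0 := by
      by_contra hodd
      have hcodd : c % 2 = 1 := by omega
      have hmem : collatz^[j] x ∈ N1 := mem_N1_of _ hcodd hc3
      rcases Nat.eq_zero_or_pos j with hj0 | hjpos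
      · subst hj0
        simp only [Function.iterate_zero_apply] at hc
        omega
      · exact hS j hjpos (by omega) (Or.inl hmem)
    have hstep : ((collatz^[j+1] x : ℕ+) : ℕ) = c / 2 := by
      rw [Function.iterate_succ_apply']
      exact collatz_even_val _ hceven
    rw [hstep, pow_succ]
    have : c / 2 * 2 = c := by omega
    calc c / 2 * (2 ^ j * 2) = (c / 2 * 2) * 2 ^ j := by ring
    _ = c * 2 ^ j := by rw [this]
    _ = (x : ℕ) := hprev

end CollatzAux

namespace CollatzAux

section PLemmas

variable {P : ↥(N1 ∪ N2) → ↥(N1 ∪ N2)}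
variable (hP : ∀ x : ↥(N1 ∪ N2), IsFirstReturn collatz (N1 ∪ N2) ↑x ↑(P x))
include hP

lemma P_eq_step (x : ↥(N1 ∪ N2)) (h1 : collatz ↑x ∈ N1 ∪ N2) : (↑(P x) : ℕ+) = collatz ↑x :=
  firstReturn_unique (hP x)
    ⟨1, one_pos, by simpa using h1, by simp, fun j hj hj' => absurd hj (by omega)⟩

lemma P_N1_eq (x : ↥(N1 ∪ N2)) (hx : (x : ℕ+) ∈ N1) : (↑(P x) : ℕ+) = collatz ↑x :=
  P_eq_step hP x (Or.inr (N1_step hx))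

lemma P_N1_mem (x : ↥(N1 ∪ N2)) (hx : (x : ℕ+) ∈ N1) : (↑(P x) : ℕ+) ∈ N2 := by
  rw [P_N1_eq hP x hx]; exact N1_step hx

lemma P_N1_val (x : ↥(N1 ∪ N2)) (hx : (x : ℕ+) ∈ N1) :
    ((P x : ℕ+) : ℕ) = 3 * ((x : ℕ+) : ℕ) + 1 := by
  rw [P_N1_eq hP x hx]
  exact collatz_odd_val _ (N1_odd hx)

lemma P_injN1 {x w : ↥(N1 ∪ N2)} (hx : (x : ℕ+) ∈ N1) (hw : (w : ℕ+) ∈ N1)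
    (h : P x = P w) : x = w := by
  have h1 := P_N1_val hP x hx
  have h2 := P_N1_val hP w hw
  rw [h] at h1
  apply Subtype.ext; apply PNat.coe_injective
  omega

lemma P_N2_pow (x : ↥(N1 ∪ N2)) (hx : (x : ℕ+) ∈ N2) :
    ∃ k, 0 < k ∧ ((P x : ℕ+) : ℕ) * 2 ^ k = ((x : ℕ+) : ℕ) ∧
      ∀ j, 0 < j → j < k → collatz^[j] ↑x ∉ N1 ∪ N2 := by
  obtain ⟨k, hk, hmem, heq, hmin⟩ := hP x
  refine ⟨k, hk, ?_, hmin⟩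
  have h := halving ↑x (by have := N2_mod3 hx; omega) (N2_even hx) k hmin k le_rfl
  rw [heq]
  exact h

lemma P_injN2 {x w : ↥(N1 ∪ N2)} (hx : (x : ℕ+) ∈ N2) (hw : (w : ℕ+) ∈ N2)
    (h : P x = P w) : x = w := by
  obtain ⟨k, hk, hxv, hminx⟩ := P_N2_pow hP x hx
  obtain ⟨k', hk', hwv, hminw⟩ := P_N2_pow hP w hw
  rw [h] at hxv
  set y := ((P w : ℕ+) : ℕ) with hy
  have key : ∀ (a c : ↥(N1 ∪ N2)), ∀ ka kc, 0 < ka → 0 < kc → ka ≤ kc →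
      y * 2 ^ ka = ((a : ℕ+) : ℕ) → y * 2 ^ kc = ((c : ℕ+) : ℕ) → (c : ℕ+) ∈ N2 →
      (∀ j, 0 < j → j < kc → collatz^[j] ↑c ∉ N1 ∪ N2) → a = c := by
    intro a c ka kc hka hkc hle ha hc hcN2 hmin
    rcases eq_or_lt_of_le hle with heq | hlt
    · subst heq
      apply Subtype.ext; apply PNat.coe_injective
      omega
    · exfalso
      have hhalf := halving ↑c (by have := N2_mod3 hcN2; omega) (N2_even hcN2) kc hmin
        (kc - ka) (by omega)
      have hpow : (2 : ℕ) ^ kc = 2 ^ ka * 2 ^ (kc - ka) := by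
        rw [← pow_add]; congr 1; omega
      have hval : ((collatz^[kc - ka] (↑c : ℕ+) : ℕ+) : ℕ) = y * 2 ^ ka := by
        have h2 : y * 2 ^ ka * 2 ^ (kc - ka) = ((c : ℕ+) : ℕ) := by
          rw [mul_assoc, ← hpow]; exact hc
        have := hhalf.trans h2.symm
        exact Nat.eq_of_mul_eq_mul_right (pow_pos (by norm_num) _) this
      have heqa : collatz^[kc - ka] (↑c : ℕ+) = (↑a : ℕ+) := by
        apply PNat.coe_injective
        rw [hval, ha]
      exact hmin (kc - ka) (by omega) (by omega) (heqa ▸ a.2)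
  rcases le_total k k' with hle | hle
  · exact key x w k k' hk hk' hle hxv hwv hw hminw
  · exact (key w x k' k hk' hk hle hwv hxv hx hminx).symm

lemma P_iter_mem_orbit (x : ↥(N1 ∪ N2)) (a : ℕ) :
    ∃ j, collatz^[j] (↑x : ℕ+) = ↑(P^[a] x) := by
  induction a with
  | zero => exact ⟨0, rfl⟩
  | succ a ih =>
    obtain ⟨j, hj⟩ := ih
    obtain ⟨k, hk, hmem, heq, hmin⟩ := hP (P^[a] x)
    refine ⟨k + j, ?_⟩
    rw [Function.iterate_add_apply, hj, Function.iterate_succ_apply', heq]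

lemma visit (x : ↥(N1 ∪ N2)) : ∀ k, collatz^[k] (↑x : ℕ+) ∈ N1 ∪ N2 →
    ∃ a, (↑(P^[a] x) : ℕ+) = collatz^[k] ↑x := by
  intro k
  induction k using Nat.strong_induction_on generalizing x with
  | _ k ih =>
    intro hk
    rcases Nat.eq_zero_or_pos k with h0 | hpos
    · subst h0; exact ⟨0, rfl⟩
    · obtain ⟨k₁, hk₁, hmem, heq, hmin⟩ := hP x
      have hle : k₁ ≤ k := by
        by_contra hlt
        exact hmin k hpos (by omega) hk
      have hsplit : collatz^[k] (↑x : ℕ+) = collatz^[k - k₁] (↑(P x) : ℕ+) := by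
        rw [heq, ← Function.iterate_add_apply]
        congr 1; omega
      rcases Nat.eq_zero_or_pos (k - k₁) with hz | _
      · refine ⟨1, ?_⟩
        rw [hsplit, hz]
        simp
      · obtain ⟨a, ha⟩ := ih (k - k₁) (by omega) (P x) (by rw [← hsplit]; exact hk)
        refine ⟨a + 1, ?_⟩
        rw [Function.iterate_add_apply, Function.iterate_one, ha, hsplit]

end PLemmas

end CollatzAux

namespace CollatzAux

lemma one_mem : (1 : ℕ+) ∈ N1 ∪ N2 := Or.inl (Or.inl rfl)
lemma four_mem : (4 : ℕ+) ∈ N1 ∪ N2 := Or.inr (Or.inl rfl)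
lemma two_notmem : (2 : ℕ+) ∉ N1 ∪ N2 := by
  rintro (h | h) <;> rcases h with h | h <;> simp at h

lemma collatz_one : collatz 1 = 4 := by decide
lemma collatz_four : collatz 4 = 2 := by decide
lemma collatz_two : collatz 2 = 1 := by decide

def pone : ↥(N1 ∪ N2) := ⟨1, one_mem⟩
def pfour : ↥(N1 ∪ N2) := ⟨4, four_mem⟩

section POne

variable {P : ↥(N1 ∪ N2) → ↥(N1 ∪ N2)}
variable (hP : ∀ x : ↥(N1 ∪ N2), IsFirstReturn collatz (N1 ∪ N2) ↑x ↑(P x))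
include hP

lemma P_pone : P pone = pfour := by
  apply Subtype.ext
  have h : collatz (↑pone : ℕ+) = 4 := collatz_one
  rw [show ((pfour : ℕ+)) = 4 from rfl, ← h]
  exact P_eq_step hP pone (h ▸ four_mem)

lemma P_pfour : P pfour = pone := by
  apply Subtype.ext
  have h2 : collatz^[2] ((pfour : ℕ+)) = 1 := by
    show collatz (collatz 4) = 1
    rw [collatz_four, collatz_two]
  have : (↑(P pfour) : ℕ+) = collatz^[2] ((pfour : ℕ+)) := by
    apply firstReturn_unique (hP pfour)
    refine ⟨2, by norm_num, h2 ▸ one_mem, rfl, ?_⟩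
    intro j hj hj'
    have : j = 1 := by omega
    subst this
    show collatz (4 : ℕ+) ∉ N1 ∪ N2
    rw [collatz_four]
    exact two_notmem
  rw [this, h2]
  rfl

lemma P_iter_pone (t : ℕ) : P^[t] pone = pone ∨ P^[t] pone = pfour := by
  induction t with
  | zero => exact Or.inl rfl
  | succ t ih =>
    rw [Function.iterate_succ_apply']
    rcases ih with h | h <;> rw [h]
    · exact Or.inr (P_pone hP)
    · exact Or.inl (P_pfour hP)

end POne

lemma hitS_aux : ∀ n : ℕ, ∀ v : ℕ+, (v : ℕ) ≤ n → ¬ (v : ℕ) % 3 = 0 →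
    ∃ k, collatz^[k] v ∈ N1 ∪ N2 := by
  intro n
  induction n with
  | zero => intro v hv _; exact absurd hv (Nat.not_le.mpr v.2)
  | succ n ih =>
    intro v hv h3
    rcases Nat.even_or_odd (v : ℕ) with he | ho
    · have hev : (v : ℕ) % 2 = 0 := Nat.even_iff.mp he
      have hval := collatz_even_val v hev
      have hvpos := v.2
      obtain ⟨k, hk⟩ := ih (collatz v) (by omega) (by omega)
      exact ⟨k + 1, by rw [Function.iterate_succ_apply]; exact hk⟩
    · refine ⟨0, Or.inl (mem_N1_of v (Nat.odd_iff.mp ho) h3)⟩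

lemma hitS : ∀ m : ℕ+, ∃ k, collatz^[k] m ∈ N1 ∪ N2 := by
  have main : ∀ n : ℕ, ∀ v : ℕ+, (v : ℕ) ≤ n → ∃ k, collatz^[k] v ∈ N1 ∪ N2 := by
    intro n
    induction n with
    | zero => intro v hv; exact absurd hv (Nat.not_le.mpr v.2)
    | succ n ih =>
      intro v hv
      by_cases h3 : (v : ℕ) % 3 = 0
      · rcases Nat.even_or_odd (v : ℕ) with he | ho
        · have hev : (v : ℕ) % 2 = 0 := Nat.even_iff.mp he
          have hval := collatz_even_val v hev
          have hvpos := v.2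
          obtain ⟨k, hk⟩ := ih (collatz v) (by omega)
          exact ⟨k + 1, by rw [Function.iterate_succ_apply]; exact hk⟩
        · have hodd : (v : ℕ) % 2 = 1 := Nat.odd_iff.mp ho
          have hval := collatz_odd_val v hodd
          obtain ⟨k, hk⟩ := hitS_aux ((collatz v : ℕ+) : ℕ) (collatz v) le_rfl (by omega)
          exact ⟨k + 1, by rw [Function.iterate_succ_apply]; exact hk⟩
      · exact hitS_aux (v : ℕ) v le_rfl h3
  intro m
  exact main (m : ℕ) m le_rfl

end CollatzAux

set_option linter.unusedSectionVars false

namespace CollatzAux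

open scoped InnerProductSpace

section Hilbert

variable {H : Type*} [NormedAddCommGroup H] [InnerProductSpace ℂ H] [CompleteSpace H]
variable (b : HilbertBasis ↥(N1 ∪ N2) ℂ H)

lemma basis_ext {u v : H} (h : ∀ w : ↥(N1 ∪ N2), ⟪b w, u⟫_ℂ = ⟪b w, v⟫_ℂ) : u = v := by
  refine b.repr.injective (lp.ext (funext fun w => ?_))
  show b.repr u w = b.repr v w
  rw [b.repr_apply_apply, b.repr_apply_apply]
  exact h w

variable {P : ↥(N1 ∪ N2) → ↥(N1 ∪ N2)}
variable (hP : ∀ x : ↥(N1 ∪ N2), IsFirstReturn collatz (N1 ∪ N2) ↑x ↑(P x))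
variable {T1 T2 : H →L[ℂ] H}
variable (hT1 : ∀ x : ↥(N1 ∪ N2), ((x : ℕ+) ∈ N1 → T1 (b x) = b (P x)) ∧
      ((x : ℕ+) ∈ N2 → T1 (b x) = 0))
variable (hT2 : ∀ x : ↥(N1 ∪ N2), ((x : ℕ+) ∈ N2 → T2 (b x) = b (P x)) ∧
      ((x : ℕ+) ∈ N1 → T2 (b x) = 0))

include hP hT1 in
lemma adjT1_eq (x : ↥(N1 ∪ N2)) (hx : (x : ℕ+) ∈ N1) :
    ContinuousLinearMap.adjoint T1 (b (P x)) = b x := by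
  classical
  have hbo := orthonormal_iff_ite.mp b.orthonormal
  apply basis_ext b
  intro w
  rw [ContinuousLinearMap.adjoint_inner_right]
  rcases w.2 with hw | hw
  · rw [(hT1 w).1 hw, hbo, hbo]
    exact if_congr ⟨fun h => P_injN1 hP hw hx h, fun h => by rw [h]⟩ rfl rfl
  · have hne : w ≠ x := by intro h; subst h; exact disj hx hw rfl
    rw [(hT1 w).2 hw, inner_zero_left, hbo, if_neg hne]

include hP hT1 in
lemma adjT1_zero (y : ↥(N1 ∪ N2)) (hy : ∀ x : ↥(N1 ∪ N2), (x : ℕ+) ∈ N1 → P x ≠ y) :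
    ContinuousLinearMap.adjoint T1 (b y) = 0 := by
  classical
  have hbo := orthonormal_iff_ite.mp b.orthonormal
  apply basis_ext b
  intro w
  rw [ContinuousLinearMap.adjoint_inner_right, inner_zero_right]
  rcases w.2 with hw | hw
  · rw [(hT1 w).1 hw, hbo, if_neg (hy w hw)]
  · rw [(hT1 w).2 hw, inner_zero_left]

include hP hT2 in
lemma adjT2_eq (x : ↥(N1 ∪ N2)) (hx : (x : ℕ+) ∈ N2) :
    ContinuousLinearMap.adjoint T2 (b (P x)) = b x := by
  classical
  have hbo := orthonormal_iff_ite.mp b.orthonormal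
  apply basis_ext b
  intro w
  rw [ContinuousLinearMap.adjoint_inner_right]
  rcases w.2 with hw | hw
  · have hne : w ≠ x := by intro h; subst h; exact disj hw hx rfl
    rw [(hT2 w).2 hw, inner_zero_left, hbo, if_neg hne]
  · rw [(hT2 w).1 hw, hbo, hbo]
    exact if_congr ⟨fun h => P_injN2 hP hw hx h, fun h => by rw [h]⟩ rfl rfl

include hP hT2 in
lemma adjT2_zero (y : ↥(N1 ∪ N2)) (hy : ∀ x : ↥(N1 ∪ N2), (x : ℕ+) ∈ N2 → P x ≠ y) :
    ContinuousLinearMap.adjoint T2 (b y) = 0 := by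
  classical
  have hbo := orthonormal_iff_ite.mp b.orthonormal
  apply basis_ext b
  intro w
  rw [ContinuousLinearMap.adjoint_inner_right, inner_zero_right]
  rcases w.2 with hw | hw
  · rw [(hT2 w).2 hw, inner_zero_left]
  · rw [(hT2 w).1 hw, hbo, if_neg (hy w hw)]

variable {S1 S2 : H →L[ℂ] H}
variable (hS1 : S1 = ContinuousLinearMap.adjoint T1 * ContinuousLinearMap.adjoint T2)
variable (hS2 : S2 = ContinuousLinearMap.adjoint T2)

include hP hT2 hS2 in
lemma stepE1 (z : ↥(N1 ∪ N2)) (hz : (z : ℕ+) ∈ N2) : S2 (b (P z)) = b z := by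
  rw [hS2]; exact adjT2_eq b hP hT2 z hz

include hS2 in
lemma starS2_eq : star S2 = T2 := by
  rw [hS2, ContinuousLinearMap.star_eq_adjoint, ContinuousLinearMap.adjoint_adjoint]

include hP hT1 hT2 hS1 hS2 in
lemma stepE2 (z : ↥(N1 ∪ N2)) (hz : (z : ℕ+) ∈ N1) : S1 ((star S2) (b (P z))) = b z := by
  have hPz : ((P z : ℕ+)) ∈ N2 := P_N1_mem hP z hz
  rw [starS2_eq hS2, (hT2 (P z)).1 hPz, hS1,
    ContinuousLinearMap.mul_apply, adjT2_eq b hP hT2 (P z) hPz, adjT1_eq b hP hT1 z hz]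

include hP hT1 hT2 hS1 in
lemma starS1_apply (m : ↥(N1 ∪ N2)) (hm : (m : ℕ+) ∈ N1) : (star S1) (b m) = b (P (P m)) := by
  have hPm : ((P m : ℕ+)) ∈ N2 := P_N1_mem hP m hm
  rw [hS1, star_mul, ContinuousLinearMap.star_eq_adjoint, ContinuousLinearMap.star_eq_adjoint,
    ContinuousLinearMap.adjoint_adjoint, ContinuousLinearMap.adjoint_adjoint,
    ContinuousLinearMap.mul_apply, (hT1 m).1 hm, (hT2 (P m)).1 hPm]

include hP hT1 hT2 hS1 hS2 in
lemma selfstep (m : ↥(N1 ∪ N2)) :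
    ∃ C ∈ NonUnitalStarAlgebra.adjoin ℂ ({S1, S2} : Set (H →L[ℂ] H)), C (b m) = b m := by
  have hS1mem : S1 ∈ NonUnitalStarAlgebra.adjoin ℂ ({S1, S2} : Set (H →L[ℂ] H)) :=
    NonUnitalStarAlgebra.subset_adjoin ℂ _ (Set.mem_insert _ _)
  have hS2mem : S2 ∈ NonUnitalStarAlgebra.adjoin ℂ ({S1, S2} : Set (H →L[ℂ] H)) :=
    NonUnitalStarAlgebra.subset_adjoin ℂ _ (Set.mem_insert_of_mem _ rfl)
  rcases m.2 with hm | hm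
  · refine ⟨(S1 * star S2) * (S2 * star S1),
      mul_mem (mul_mem hS1mem (star_mem hS2mem)) (mul_mem hS2mem (star_mem hS1mem)), ?_⟩
    have hPm : ((P m : ℕ+)) ∈ N2 := P_N1_mem hP m hm
    simp only [ContinuousLinearMap.mul_apply]
    rw [starS1_apply b hP hT1 hT2 hS1 m hm, stepE1 b hP hT2 hS2 (P m) hPm,
      stepE2 b hP hT1 hT2 hS1 hS2 m hm]
  · refine ⟨S2 * star S2, mul_mem hS2mem (star_mem hS2mem), ?_⟩
    rw [ContinuousLinearMap.mul_apply, starS2_eq hS2, (hT2 m).1 hm,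
      stepE1 b hP hT2 hS2 m hm]

include hP hT1 hT2 hS1 hS2 in
lemma backstep (z : ↥(N1 ∪ N2)) :
    ∃ C ∈ NonUnitalStarAlgebra.adjoin ℂ ({S1, S2} : Set (H →L[ℂ] H)), C (b (P z)) = b z := by
  have hS1mem : S1 ∈ NonUnitalStarAlgebra.adjoin ℂ ({S1, S2} : Set (H →L[ℂ] H)) :=
    NonUnitalStarAlgebra.subset_adjoin ℂ _ (Set.mem_insert _ _)
  have hS2mem : S2 ∈ NonUnitalStarAlgebra.adjoin ℂ ({S1, S2} : Set (H →L[ℂ] H)) :=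
    NonUnitalStarAlgebra.subset_adjoin ℂ _ (Set.mem_insert_of_mem _ rfl)
  rcases z.2 with hz | hz
  · exact ⟨S1 * star S2, mul_mem hS1mem (star_mem hS2mem),
      by rw [ContinuousLinearMap.mul_apply]; exact stepE2 b hP hT1 hT2 hS1 hS2 z hz⟩
  · exact ⟨S2, hS2mem, stepE1 b hP hT2 hS2 z hz⟩

include hP hT1 hT2 hS1 hS2 in
lemma reach (m : ↥(N1 ∪ N2)) (a : ℕ) :
    ∃ C ∈ NonUnitalStarAlgebra.adjoin ℂ ({S1, S2} : Set (H →L[ℂ] H)),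
      C (b (P^[a] m)) = b m := by
  induction a with
  | zero => exact selfstep b hP hT1 hT2 hS1 hS2 m
  | succ a ih =>
    obtain ⟨C, hC, hCb⟩ := ih
    obtain ⟨C₁, hC₁, hC₁b⟩ := backstep b hP hT1 hT2 hS1 hS2 (P^[a] m)
    refine ⟨C * C₁, mul_mem hC hC₁, ?_⟩
    rw [ContinuousLinearMap.mul_apply, Function.iterate_succ_apply', hC₁b, hCb]

end Hilbert

end CollatzAux

open CollatzAux in
open scoped InnerProductSpace in
/-- Some basis vector `eₙ` is cyclic for `C*(S₁,S₂)` iff the Collatz conjecture holds. -/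
theorem cyclic_cuntz_iff_collatz {H : Type*} [NormedAddCommGroup H] [InnerProductSpace ℂ H]
    [CompleteSpace H] (b : HilbertBasis ↥(N1 ∪ N2) ℂ H)
    (P : ↥(N1 ∪ N2) → ↥(N1 ∪ N2))
    (hP : ∀ x : ↥(N1 ∪ N2), IsFirstReturn collatz (N1 ∪ N2) ↑x ↑(P x))
    (T1 T2 : H →L[ℂ] H)
    (hT1 : ∀ x : ↥(N1 ∪ N2), ((x : ℕ+) ∈ N1 → T1 (b x) = b (P x)) ∧
      ((x : ℕ+) ∈ N2 → T1 (b x) = 0))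
    (hT2 : ∀ x : ↥(N1 ∪ N2), ((x : ℕ+) ∈ N2 → T2 (b x) = b (P x)) ∧
      ((x : ℕ+) ∈ N1 → T2 (b x) = 0))
    (S1 S2 : H →L[ℂ] H)
    (hS1 : S1 = ContinuousLinearMap.adjoint T1 * ContinuousLinearMap.adjoint T2)
    (hS2 : S2 = ContinuousLinearMap.adjoint T2) :
    (∃ n : ↥(N1 ∪ N2), closure ((fun A => A (b n)) '' CstarGen {S1, S2}) = Set.univ) ↔
      ∀ m : ℕ+, (1 : ℕ+) ∈ orbit collatz m := by
  classical
  constructor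
  · -- cyclic vector implies Collatz
    rintro ⟨n, hn⟩ m
    set R : ↥(N1 ∪ N2) → Prop := fun z => ∃ a c, P^[a] z = P^[c] n with hR
    set M₀ : Submodule ℂ H := Submodule.span ℂ (b '' {z | R z}) with hM₀
    set K : Submodule ℂ H := M₀.topologicalClosure with hKdef
    have hKclosure : (K : Set H) = closure (M₀ : Set H) := Submodule.topologicalClosure_coe M₀
    have hK_basis : ∀ z, R z → b z ∈ K := fun z hz =>
      Submodule.le_topologicalClosure M₀ (Submodule.subset_span ⟨z, hz, rfl⟩)
    have presK : ∀ A : H →L[ℂ] H, (∀ z, R z → A (b z) ∈ K) → ∀ v ∈ K, A v ∈ K := by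
      intro A hA v hv
      have hsub : M₀ ≤ Submodule.comap (A : H →ₗ[ℂ] H) K := by
        apply Submodule.span_le.mpr
        rintro _ ⟨z, hz, rfl⟩
        exact hA z hz
      have hclosed : IsClosed ((Submodule.comap (A : H →ₗ[ℂ] H) K : Submodule ℂ H) : Set H) := by
        have : ((Submodule.comap (A : H →ₗ[ℂ] H) K : Submodule ℂ H) : Set H) =
            A ⁻¹' (K : Set H) := rfl
        rw [this]
        exact (Submodule.isClosed_topologicalClosure M₀).preimage A.continuous
      have hcl : closure (M₀ : Set H) ⊆
          ((Submodule.comap (A : H →ₗ[ℂ] H) K : Submodule ℂ H) : Set H) :=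
        closure_minimal hsub hclosed
      have hv' : v ∈ closure (M₀ : Set H) := by rw [← hKclosure]; exact hv
      exact hcl hv'
    have hRP : ∀ z, R z → R (P z) := by
      rintro z ⟨a, c, hac⟩
      refine ⟨a, c + 1, ?_⟩
      calc P^[a] (P z) = P^[a + 1] z := (Function.iterate_succ_apply P a z).symm
        _ = P (P^[a] z) := Function.iterate_succ_apply' P a z
        _ = P (P^[c] n) := by rw [hac]
        _ = P^[c + 1] n := (Function.iterate_succ_apply' P c n).symm
    have hRPre : ∀ z x, R z → P x = z → R x := by
      rintro z x ⟨a, c, hac⟩ hxz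
      exact ⟨a + 1, c, by rw [Function.iterate_add_apply, Function.iterate_one, hxz, hac]⟩
    have pres_T1 : ∀ v ∈ K, T1 v ∈ K := by
      refine presK T1 fun z hz => ?_
      rcases z.2 with hzm | hzm
      · rw [(hT1 z).1 hzm]; exact hK_basis (P z) (hRP z hz)
      · rw [(hT1 z).2 hzm]; exact K.zero_mem
    have pres_T2 : ∀ v ∈ K, T2 v ∈ K := by
      refine presK T2 fun z hz => ?_
      rcases z.2 with hzm | hzm
      · rw [(hT2 z).2 hzm]; exact K.zero_mem
      · rw [(hT2 z).1 hzm]; exact hK_basis (P z) (hRP z hz)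
    have pres_T1adj : ∀ v ∈ K, ContinuousLinearMap.adjoint T1 v ∈ K := by
      refine presK _ fun z hz => ?_
      by_cases hex : ∃ x : ↥(N1 ∪ N2), (x : ℕ+) ∈ N1 ∧ P x = z
      · obtain ⟨x, hx1, hx2⟩ := hex
        rw [← hx2, adjT1_eq b hP hT1 x hx1]
        exact hK_basis x (hRPre z x hz hx2)
      · rw [adjT1_zero b hP hT1 z fun x hx h => hex ⟨x, hx, h⟩]
        exact K.zero_mem
    have pres_T2adj : ∀ v ∈ K, ContinuousLinearMap.adjoint T2 v ∈ K := by
      refine presK _ fun z hz => ?_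
      by_cases hex : ∃ x : ↥(N1 ∪ N2), (x : ℕ+) ∈ N2 ∧ P x = z
      · obtain ⟨x, hx1, hx2⟩ := hex
        rw [← hx2, adjT2_eq b hP hT2 x hx1]
        exact hK_basis x (hRPre z x hz hx2)
      · rw [adjT2_zero b hP hT2 z fun x hx h => hex ⟨x, hx, h⟩]
        exact K.zero_mem
    have main : ∀ C ∈ NonUnitalStarAlgebra.adjoin ℂ ({S1, S2} : Set (H →L[ℂ] H)),
        (∀ v ∈ K, C v ∈ K) ∧ (∀ v ∈ K, (star C) v ∈ K) := by
      intro C hC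
      induction hC using NonUnitalStarAlgebra.adjoin_induction with
      | mem x hx =>
        rcases hx with hx | hx
        · rw [hx]
          constructor
          · intro v hv
            rw [hS1, ContinuousLinearMap.mul_apply]
            exact pres_T1adj _ (pres_T2adj _ hv)
          · intro v hv
            have hst : star S1 = T2 * T1 := by
              rw [hS1, star_mul, ContinuousLinearMap.star_eq_adjoint,
                ContinuousLinearMap.star_eq_adjoint, ContinuousLinearMap.adjoint_adjoint,
                ContinuousLinearMap.adjoint_adjoint]
            rw [hst, ContinuousLinearMap.mul_apply]
            exact pres_T2 _ (pres_T1 _ hv)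
        · rw [Set.mem_singleton_iff] at hx
          rw [hx]
          constructor
          · intro v hv
            rw [hS2]
            exact pres_T2adj _ hv
          · intro v hv
            rw [starS2_eq hS2]
            exact pres_T2 _ hv
      | add x y hx hy ihx ihy =>
        constructor
        · intro v hv
          rw [ContinuousLinearMap.add_apply]
          exact K.add_mem (ihx.1 v hv) (ihy.1 v hv)
        · intro v hv
          rw [star_add, ContinuousLinearMap.add_apply]
          exact K.add_mem (ihx.2 v hv) (ihy.2 v hv)
      | zero =>
        constructor
        · intro v hv; rw [ContinuousLinearMap.zero_apply]; exact K.zero_mem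
        · intro v hv; rw [star_zero, ContinuousLinearMap.zero_apply]; exact K.zero_mem
      | mul x y hx hy ihx ihy =>
        constructor
        · intro v hv
          rw [ContinuousLinearMap.mul_apply]
          exact ihx.1 _ (ihy.1 v hv)
        · intro v hv
          rw [star_mul, ContinuousLinearMap.mul_apply]
          exact ihy.2 _ (ihx.2 v hv)
      | smul r x hx ihx =>
        constructor
        · intro v hv
          rw [ContinuousLinearMap.smul_apply]
          exact K.smul_mem r (ihx.1 v hv)
        · intro v hv
          rw [star_smul, ContinuousLinearMap.smul_apply]
          exact K.smul_mem _ (ihx.2 v hv)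
      | star x hx ihx =>
        exact ⟨ihx.2, by simpa [star_star] using ihx.1⟩
    have hCact : ∀ C ∈ CstarGen ({S1, S2} : Set (H →L[ℂ] H)), C (b n) ∈ K := by
      intro C hC
      have hbn : b n ∈ K := hK_basis n ⟨0, 0, rfl⟩
      have hmapsTo : Set.MapsTo (fun A : H →L[ℂ] H => A (b n))
          ((NonUnitalStarAlgebra.adjoin ℂ ({S1, S2} : Set (H →L[ℂ] H)) : Set (H →L[ℂ] H)))
          (K : Set H) := fun A hA => (main A hA).1 _ hbn
      have hcont : Continuous (fun A : H →L[ℂ] H => A (b n)) :=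
        (ContinuousLinearMap.apply ℂ H (b n)).continuous
      have := hmapsTo.closure hcont
      have hKclosed : closure (K : Set H) = (K : Set H) :=
        (Submodule.isClosed_topologicalClosure M₀).closure_eq
      have hmem : C (b n) ∈ closure (K : Set H) := this hC
      rw [hKclosed] at hmem
      exact hmem
    have hall : ∀ z : ↥(N1 ∪ N2), R z := by
      intro z
      by_contra hz
      have hbz : b z ∈ K := by
        have huniv : (Set.univ : Set H) ⊆ (K : Set H) := by
          rw [← hn]
          apply closure_minimal ?_ (Submodule.isClosed_topologicalClosure M₀)
          rintro _ ⟨C, hC, rfl⟩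
          exact hCact C hC
        exact huniv (Set.mem_univ _)
      have horto : ∀ v ∈ (K : Set H), ⟪b z, v⟫_ℂ = 0 := by
        have hcl : IsClosed {v : H | ⟪b z, v⟫_ℂ = 0} :=
          isClosed_eq (continuous_const.inner continuous_id) continuous_const
        have hsub : (M₀ : Set H) ⊆ {v : H | ⟪b z, v⟫_ℂ = 0} := by
          intro v hvM
          induction hvM using Submodule.span_induction with
          | mem w hw =>
            obtain ⟨z', hz', rfl⟩ := hw
            have hne : z ≠ z' := fun h => hz (h ▸ hz')
            have hbo := orthonormal_iff_ite.mp b.orthonormal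
            show ⟪b z, b z'⟫_ℂ = 0
            rw [hbo, if_neg hne]
          | zero => show ⟪b z, (0 : H)⟫_ℂ = 0; rw [inner_zero_right]
          | add u w hu hw ihu ihw =>
            show ⟪b z, u + w⟫_ℂ = 0
            rw [inner_add_right, ihu, ihw, add_zero]
          | smul r u hu ihu =>
            show ⟪b z, r • u⟫_ℂ = 0
            rw [inner_smul_right, ihu, mul_zero]
        intro v hv
        have hv' : v ∈ closure (M₀ : Set H) := by rw [← hKclosure]; exact hv
        exact closure_minimal hsub hcl hv'
      have h1 := horto (b z) hbz
      have hbo := orthonormal_iff_ite.mp b.orthonormal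
      rw [hbo, if_pos rfl] at h1
      exact one_ne_zero h1
    -- derive Collatz for m
    obtain ⟨k₀, hk₀⟩ := hitS m
    set s : ↥(N1 ∪ N2) := ⟨collatz^[k₀] m, hk₀⟩ with hs
    obtain ⟨a, c, hac⟩ := hall s
    obtain ⟨t, d, htd⟩ := hall pone
    have hcomb : P^[d + a] s = P^[c + t] pone := by
      calc P^[d + a] s = P^[d] (P^[a] s) := Function.iterate_add_apply _ _ _ _
        _ = P^[d] (P^[c] n) := by rw [hac]
        _ = P^[d + c] n := (Function.iterate_add_apply _ _ _ _).symm
        _ = P^[c + d] n := by rw [add_comm]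
        _ = P^[c] (P^[d] n) := Function.iterate_add_apply _ _ _ _
        _ = P^[c] (P^[t] pone) := by rw [← htd]
        _ = P^[c + t] pone := (Function.iterate_add_apply _ _ _ _).symm
    obtain ⟨j, hj⟩ := P_iter_mem_orbit hP s (d + a)
    have hkey : collatz^[j + k₀] m = ((P^[d + a] s : ↥(N1 ∪ N2)) : ℕ+) := by
      rw [Function.iterate_add_apply]
      exact hj
    rcases P_iter_pone hP (c + t) with h | h
    · refine ⟨j + k₀, ?_⟩
      show collatz^[j + k₀] m = 1
      rw [hkey, hcomb, h]
      rfl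
    · refine ⟨2 + (j + k₀), ?_⟩
      show collatz^[2 + (j + k₀)] m = 1
      rw [Function.iterate_add_apply, hkey, hcomb, h]
      show collatz (collatz 4) = 1
      rw [collatz_four, collatz_two]
  · -- Collatz implies cyclic vector
    intro hC
    refine ⟨pone, ?_⟩
    have hbasis : ∀ m : ↥(N1 ∪ N2),
        ∃ C ∈ NonUnitalStarAlgebra.adjoin ℂ ({S1, S2} : Set (H →L[ℂ] H)),
          C (b pone) = b m := by
      intro m
      obtain ⟨k, hk⟩ := Set.mem_range.mp (hC (m : ℕ+))
      have h1 : collatz^[k] ((m : ℕ+)) ∈ N1 ∪ N2 := by rw [hk]; exact one_mem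
      obtain ⟨a, ha⟩ := visit hP m k h1
      have hpa : P^[a] m = pone := Subtype.ext (by rw [ha, hk]; rfl)
      obtain ⟨C, hCmem, hCb⟩ := reach b hP hT1 hT2 hS1 hS2 m a
      exact ⟨C, hCmem, by rw [← hpa, hCb]⟩
    let evalL : (H →L[ℂ] H) →ₗ[ℂ] H :=
      { toFun := fun A => A (b pone)
        map_add' := fun A B => rfl
        map_smul' := fun c A => rfl }
    let M : Submodule ℂ H :=
      Submodule.map evalL
        (NonUnitalStarAlgebra.adjoin ℂ ({S1, S2} : Set (H →L[ℂ] H))).toNonUnitalSubalgebra.toSubmodule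
    have hMsub : (M : Set H) ⊆ (fun A => A (b pone)) '' CstarGen ({S1, S2} : Set (H →L[ℂ] H)) := by
      rintro _ ⟨A, hA, rfl⟩
      exact ⟨A, subset_closure hA, rfl⟩
    have hrange : Set.range b ⊆ (M : Set H) := by
      rintro _ ⟨m, rfl⟩
      obtain ⟨C, hCmem, hCb⟩ := hbasis m
      exact ⟨C, hCmem, hCb⟩
    have hspan : Submodule.span ℂ (Set.range b) ≤ M := Submodule.span_le.mpr hrange
    have htop : M.topologicalClosure = ⊤ := by
      rw [eq_top_iff, ← b.dense_span]
      exact Submodule.topologicalClosure_mono hspan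
    have hMuniv : closure (M : Set H) = Set.univ := by
      rw [← Submodule.topologicalClosure_coe, htop]
      rfl
    apply Set.eq_univ_of_univ_subset
    rw [← hMuniv]
    exact closure_mono hMsub
end

section
/- Let P be the first-return map of the Collatz map on N1 ∪ N2, H a complex Hilbert space with orthonormal basis {e_n}_{n ∈ N1∪N2}, T1, T2 the bounded operators with T1 e_n = e_{P(n)} for n ∈ N1, T1 e_n = 0 for n ∈ N2, T2 e_n = e_{P(n)} for n ∈ N2, T2 e_n = 0 for n ∈ N1, and S1 = T1*T2*, S2 = T2*. Then the following are equivalent: (i) C*(S1,S2) has no non-trivial reducing subspaces; (ii) the Collatz conjecture holds. -/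
set_option linter.unusedSectionVars false

namespace CollatzCuntzAux

open scoped InnerProductSpace ComplexConjugate

lemma collatz_coe (n : ℕ+) :
    ((collatz n) : ℕ) = if (n:ℕ) % 2 = 1 then 3*(n:ℕ)+1 else (n:ℕ)/2 := by
  unfold collatz
  split_ifs with h <;> simp [h]

lemma collatz_odd {n : ℕ+} (h : (n:ℕ) % 2 = 1) : ((collatz n) : ℕ) = 3*(n:ℕ)+1 := by
  rw [collatz_coe, if_pos h]

lemma collatz_even {n : ℕ+} (h : (n:ℕ) % 2 = 0) : ((collatz n) : ℕ) = (n:ℕ)/2 := by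
  rw [collatz_coe, if_neg (by omega)]

lemma three_dvd_collatz {n : ℕ+} (h : 3 ∣ ((collatz n) : ℕ)) : 3 ∣ (n:ℕ) := by
  rcases Nat.even_or_odd (n:ℕ) with he | ho
  · have h2 : (n:ℕ) % 2 = 0 := Nat.even_iff.mp he
    rw [collatz_even h2] at h
    rcases h with ⟨c, hc⟩
    have : (n:ℕ) = 2 * ((n:ℕ)/2) := by omega
    omega
  · have h2 : (n:ℕ) % 2 = 1 := Nat.odd_iff.mp ho
    rw [collatz_odd h2] at h
    omega

lemma three_dvd_iterate {n : ℕ+} {k : ℕ} (h : 3 ∣ ((collatz^[k] n) : ℕ)) : 3 ∣ (n:ℕ) := by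
  induction k generalizing n with
  | zero => simpa using h
  | succ k ih =>
    rw [Function.iterate_succ_apply] at h
    exact three_dvd_collatz (ih h)

lemma N2_mod3 {n : ℕ+} (h : n ∈ N2) : (n:ℕ) % 3 = 1 := by
  rcases h with h | h <;> omega

lemma N1_odd {n : ℕ+} (h : n ∈ N1) : (n:ℕ) % 2 = 1 := by
  rcases h with h | h <;> omega

lemma N2_even {n : ℕ+} (h : n ∈ N2) : (n:ℕ) % 2 = 0 := by
  rcases h with h | h <;> omega

lemma odd_not_mem_S {n : ℕ+} (ho : (n:ℕ) % 2 = 1) (h : n ∉ N1 ∪ N2) : 3 ∣ (n:ℕ) := by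
  have h1 : n ∉ N1 := fun hx => h (Or.inl hx)
  have : ¬ ((n:ℕ) % 6 = 1 ∨ (n:ℕ) % 6 = 5) := h1
  omega

-- if collatz c = collatz d with c ≠ d then one of them is odd (and in fact exactly one)
lemma collatz_eq_cases {c d : ℕ+} (h : collatz c = collatz d) (hne : c ≠ d) :
    (c:ℕ) % 2 = 1 ∨ (d:ℕ) % 2 = 1 := by
  by_contra hcon
  push_neg at hcon
  have hc : (c:ℕ) % 2 = 0 := by omega
  have hd : (d:ℕ) % 2 = 0 := by omega
  have := congrArg (fun m : ℕ+ => (m:ℕ)) h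
  simp only [collatz_even hc, collatz_even hd] at this
  exact hne (PNat.coe_injective (by omega))

lemma chains_eq : ∀ n k l : ℕ, k + l ≤ n → 0 < k → 0 < l → ∀ x y : ℕ+, x ∈ N2 → y ∈ N2 →
    collatz^[k] x = collatz^[l] y → (∀ j, 0 < j → j < k → collatz^[j] x ∉ N1 ∪ N2) →
    (∀ j, 0 < j → j < l → collatz^[j] y ∉ N1 ∪ N2) → x = y := by
  intro n
  induction n with
  | zero => intro k l hn hk; omega
  | succ n ih =>
    intro k l hn hk hl x y hx hy heq hxm hym
    set c := collatz^[k-1] x with hc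
    set d := collatz^[l-1] y with hd
    have hkc : collatz c = collatz^[k] x := by
      conv_rhs => rw [show k = (k-1)+1 by omega, Function.iterate_succ_apply']
    have hld : collatz d = collatz^[l] y := by
      conv_rhs => rw [show l = (l-1)+1 by omega, Function.iterate_succ_apply']
    have hcd : collatz c = collatz d := by rw [hkc, hld, heq]
    by_cases hce : c = d
    · -- same predecessor
      rcases Nat.lt_or_ge 1 k with hk2 | hk1
      · rcases Nat.lt_or_ge 1 l with hl2 | hl1
        · -- both ≥ 2 : recurse
          refine ih (k-1) (l-1) (by omega) (by omega) (by omega) x y hx hy ?_ ?_ ?_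
          · rw [show k - 1 = (k-1) from rfl]; rw [← hc, hce, hd]
          · intro j hj1 hj2; exact hxm j hj1 (by omega)
          · intro j hj1 hj2; exact hym j hj1 (by omega)
        · -- k ≥ 2, l = 1 : d = y ∈ N2 but d = c = intermediate of x-chain
          have hl1' : l = 1 := by omega
          have : collatz^[k-1] x ∉ N1 ∪ N2 := hxm (k-1) (by omega) (by omega)
          rw [← hc, hce, hd, hl1'] at this
          simp at this
          exact (this.2 hy).elim
      · rcases Nat.lt_or_ge 1 l with hl2 | hl1
        · have hk1' : k = 1 := by omega
          have : collatz^[l-1] y ∉ N1 ∪ N2 := hym (l-1) (by omega) (by omega)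
          rw [← hd, ← hce, hc, hk1'] at this
          simp at this
          exact (this.2 hx).elim
        · -- k = l = 1
          have hk1' : k = 1 := by omega
          have hl1' : l = 1 := by omega
          have : c = x := by rw [hc, hk1']; simp
          have hdy : d = y := by rw [hd, hl1']; simp
          rw [← this, hce, hdy]
    · -- different predecessors: one must be odd, divisible by 3, contradiction
      have hodd := collatz_eq_cases hcd hce
      have key : ∀ (m : ℕ) (w : ℕ+), w ∈ N2 → 0 < m →
          ((collatz^[m-1] w : ℕ+) : ℕ) % 2 = 1 →
          (∀ j, 0 < j → j < m → collatz^[j] w ∉ N1 ∪ N2) → False := by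
        intro m w hw hm ho hwm
        have hm1 : 0 < m - 1 := by
          rcases Nat.eq_or_lt_of_le hm with h1 | h1
          · exfalso
            have : m = 1 := by omega
            rw [this] at ho
            simp at ho
            have := N2_even hw
            omega
          · omega
        have hnotS : collatz^[m-1] w ∉ N1 ∪ N2 := hwm (m-1) hm1 (by omega)
        have h3 : 3 ∣ ((collatz^[m-1] w : ℕ+) : ℕ) := odd_not_mem_S ho hnotS
        have := three_dvd_iterate h3
        have := N2_mod3 hw
        omega
      rcases hodd with ho | ho
      · exact (key k x hx hk ho hxm).elim
      · exact (key l y hy hl ho hym).elim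

example : ((4:ℕ+):ℕ) = 4 := rfl
example : ((2:ℕ+):ℕ) = 2 := rfl
example : ((1:ℕ+):ℕ) = 1 := rfl

lemma one_mem_N1 : (1:ℕ+) ∈ N1 := Or.inl rfl
lemma four_mem_N2 : (4:ℕ+) ∈ N2 := Or.inl rfl
lemma two_not_mem : (2:ℕ+) ∉ N1 ∪ N2 := by
  rintro (h | h) <;> rcases h with h | h <;> simp at h

lemma collatz_one : collatz (1:ℕ+) = 4 := by
  apply PNat.coe_injective
  rw [collatz_odd (by rfl)]; rfl

lemma collatz_four : collatz (4:ℕ+) = 2 := by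
  apply PNat.coe_injective
  rw [collatz_even (by rfl)]; rfl

lemma collatz_two : collatz (2:ℕ+) = 1 := by
  apply PNat.coe_injective
  rw [collatz_even (by rfl)]; rfl

lemma isFirstReturn_unique {X : Type*} {f : X → X} {S : Set X} {x y y' : X}
    (h : IsFirstReturn f S x y) (h' : IsFirstReturn f S x y') : y = y' := by
  obtain ⟨k, hk, hkS, hky, hkmin⟩ := h
  obtain ⟨l, hl, hlS, hly, hlmin⟩ := h'
  rcases lt_trichotomy k l with hlt | heq | hgt
  · exact absurd hkS (hlmin k hk hlt)
  · rw [hky, hly, heq]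
  · exact absurd hlS (hkmin l hl hgt)

lemma firstReturn_step1 {x y : ℕ+} (h : IsFirstReturn collatz (N1 ∪ N2) x y)
    (h1 : collatz x ∈ N1 ∪ N2) : y = collatz x :=
  isFirstReturn_unique h ⟨1, one_pos, by simpa using h1, by simp, by omega⟩

lemma firstReturn_step2 {x y : ℕ+} (h : IsFirstReturn collatz (N1 ∪ N2) x y)
    (h1 : collatz x ∉ N1 ∪ N2) (h2 : collatz (collatz x) ∈ N1 ∪ N2) :
    y = collatz (collatz x) := by
  refine isFirstReturn_unique h ⟨2, by omega, ?_, ?_, ?_⟩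
  · simpa [Function.iterate_succ_apply] using h2
  · simp [Function.iterate_succ_apply]
  · intro j hj1 hj2
    have : j = 1 := by omega
    simpa [this] using h1

lemma N1_step {x : ℕ+} (hx : x ∈ N1) :
    collatz x ∈ N2 ∧ ((collatz x : ℕ+) : ℕ) = 3*(x:ℕ)+1 := by
  have ho := N1_odd hx
  have hc := collatz_odd ho
  refine ⟨?_, hc⟩
  rcases hx with h | h
  · left; omega
  · right; omega

lemma N2_of_N1_surj {y : ℕ+} (hy : y ∈ N2) : ∃ x : ℕ+, x ∈ N1 ∧ collatz x = y := by
  have h4 : 4 ≤ (y:ℕ) := by rcases hy with h | h <;> omega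
  refine ⟨⟨((y:ℕ)-1)/3, by omega⟩, ?_, ?_⟩
  · show ((((y:ℕ)-1)/3) % 6 = 1) ∨ ((((y:ℕ)-1)/3) % 6 = 5)
    rcases hy with h | h
    · left; omega
    · right; omega
  · apply PNat.coe_injective
    have ho : ((⟨((y:ℕ)-1)/3, by omega⟩ : ℕ+) : ℕ) % 2 = 1 := by
      show (((y:ℕ)-1)/3) % 2 = 1
      rcases hy with h | h <;> omega
    rw [collatz_odd ho]
    show 3 * (((y:ℕ)-1)/3) + 1 = (y:ℕ)
    rcases hy with h | h <;> omega

lemma iterate_of_one (r : ℕ) :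
    collatz^[r] (1:ℕ+) = 1 ∨ collatz^[r] (1:ℕ+) = 4 ∨ collatz^[r] (1:ℕ+) = 2 := by
  induction r with
  | zero => left; rfl
  | succ r ih =>
    rw [Function.iterate_succ_apply']
    rcases ih with h | h | h <;> rw [h]
    · right; left; exact collatz_one
    · right; right; exact collatz_four
    · left; exact collatz_two

lemma orbit_iff_exists {X : Type*} (f : X → X) (x y : X) :
    y ∈ orbit f x ↔ ∃ k, f^[k] x = y := Iff.rfl

lemma one_mem_orbit_shift {x : ℕ+} (h : (1:ℕ+) ∈ orbit collatz x) (k : ℕ) :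
    (1:ℕ+) ∈ orbit collatz (collatz^[k] x) := by
  obtain ⟨r, hr⟩ := h
  rcases Nat.lt_or_ge r k with hlt | hle
  · have : collatz^[k] x = collatz^[k - r] (1:ℕ+) := by
      rw [← hr, ← Function.iterate_add_apply]
      congr 1; omega
    rw [this]
    rcases iterate_of_one (k - r) with h1 | h1 | h1 <;> rw [h1]
    · exact ⟨0, rfl⟩
    · refine ⟨2, ?_⟩
      show collatz^[2] (4:ℕ+) = 1
      rw [show (2:ℕ) = 1+1 from rfl, Function.iterate_add_apply]
      simp [collatz_four, collatz_two]
    · refine ⟨1, ?_⟩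
      show collatz^[1] (2:ℕ+) = 1
      simp [collatz_two]
  · refine ⟨r - k, ?_⟩
    show collatz^[r-k] (collatz^[k] x) = 1
    rw [← Function.iterate_add_apply]
    rw [show r - k + k = r by omega]; exact hr

lemma one_mem_orbit_unshift {x : ℕ+} {k : ℕ} (h : (1:ℕ+) ∈ orbit collatz (collatz^[k] x)) :
    (1:ℕ+) ∈ orbit collatz x := by
  obtain ⟨r, hr⟩ := h
  refine ⟨r + k, ?_⟩
  show collatz^[r+k] x = 1
  rw [Function.iterate_add_apply]; exact hr

lemma exists_iter_N1_of_not_dvd : ∀ m : ℕ, ∀ n : ℕ+, (n:ℕ) ≤ m → ¬ 3 ∣ (n:ℕ) →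
    ∃ k, collatz^[k] n ∈ N1 := by
  intro m
  induction m with
  | zero => intro n hn; exact absurd hn (not_le.mpr n.2)
  | succ m ih =>
    intro n hn h3
    rcases Nat.even_or_odd (n:ℕ) with he | ho
    · have h2 : (n:ℕ) % 2 = 0 := Nat.even_iff.mp he
      have hc : ((collatz n : ℕ+):ℕ) = (n:ℕ)/2 := collatz_even h2
      have hpos := n.2
      obtain ⟨k, hk⟩ := ih (collatz n) (by omega) (by omega)
      exact ⟨k+1, by rwa [Function.iterate_succ_apply]⟩
    · have h2 : (n:ℕ) % 2 = 1 := Nat.odd_iff.mp ho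
      refine ⟨0, ?_⟩
      show n ∈ N1
      have h3' : (n:ℕ) % 3 ≠ 0 := fun h => h3 (Nat.dvd_of_mod_eq_zero h)
      show (n:ℕ) % 6 = 1 ∨ (n:ℕ) % 6 = 5
      omega

lemma exists_iter_N1 : ∀ m : ℕ, ∀ n : ℕ+, (n:ℕ) ≤ m → ∃ k, collatz^[k] n ∈ N1 := by
  intro m
  induction m with
  | zero => intro n hn; exact absurd hn (not_le.mpr n.2)
  | succ m ih =>
    intro n hn
    by_cases h3 : 3 ∣ (n:ℕ)
    · rcases Nat.even_or_odd (n:ℕ) with he | ho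
      · have h2 : (n:ℕ) % 2 = 0 := Nat.even_iff.mp he
        have hc : ((collatz n : ℕ+):ℕ) = (n:ℕ)/2 := collatz_even h2
        have hpos := n.2
        obtain ⟨k, hk⟩ := ih (collatz n) (by omega)
        exact ⟨k+1, by rwa [Function.iterate_succ_apply]⟩
      · have h2 : (n:ℕ) % 2 = 1 := Nat.odd_iff.mp ho
        have hc : ((collatz n : ℕ+):ℕ) = 3*(n:ℕ)+1 := collatz_odd h2
        obtain ⟨k, hk⟩ := exists_iter_N1_of_not_dvd ((collatz n :ℕ+):ℕ) (collatz n) le_rfl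
          (by omega)
        exact ⟨k+1, by rwa [Function.iterate_succ_apply]⟩
    · exact exists_iter_N1_of_not_dvd (n:ℕ) n le_rfl h3

lemma orbit_meets_N1 (m : ℕ+) : ∃ w : ℕ+, w ∈ N1 ∧ w ∈ orbit collatz m := by
  obtain ⟨k, hk⟩ := exists_iter_N1 (m:ℕ) m le_rfl
  exact ⟨collatz^[k] m, hk, ⟨k, rfl⟩⟩

section Pmap

variable (P : ↥(N1 ∪ N2) → ↥(N1 ∪ N2))
variable (hP : ∀ x : ↥(N1 ∪ N2), IsFirstReturn collatz (N1 ∪ N2) ↑x ↑(P x))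

include hP

lemma P_coe_N1 {x : ↥(N1 ∪ N2)} (hx : (x:ℕ+) ∈ N1) : (↑(P x) : ℕ+) = collatz ↑x :=
  firstReturn_step1 (hP x) (Or.inr (N1_step hx).1)

lemma P_mem_N2 {x : ↥(N1 ∪ N2)} (hx : (x:ℕ+) ∈ N1) : (↑(P x) : ℕ+) ∈ N2 := by
  rw [P_coe_N1 P hP hx]; exact (N1_step hx).1

lemma P_inj_N1 {x y : ↥(N1 ∪ N2)} (hx : (x:ℕ+) ∈ N1) (hy : (y:ℕ+) ∈ N1)
    (h : P x = P y) : x = y := by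
  have h1 := P_coe_N1 P hP hx
  have h2 := P_coe_N1 P hP hy
  have : collatz ↑x = collatz ↑y := by rw [← h1, ← h2, h]
  have hcx := (N1_step hx).2
  have hcy := (N1_step hy).2
  have : ((collatz (x:ℕ+) : ℕ+):ℕ) = ((collatz (y:ℕ+) : ℕ+):ℕ) := by rw [this]
  rw [hcx, hcy] at this
  exact Subtype.ext (PNat.coe_injective (by omega))

lemma P_inj_N2 {x y : ↥(N1 ∪ N2)} (hx : (x:ℕ+) ∈ N2) (hy : (y:ℕ+) ∈ N2)
    (h : P x = P y) : x = y := by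
  obtain ⟨k, hk, hkS, hky, hkmin⟩ := hP x
  obtain ⟨l, hl, hlS, hly, hlmin⟩ := hP y
  have heq : collatz^[k] ↑x = collatz^[l] ↑y := by rw [← hky, ← hly, h]
  exact Subtype.ext (chains_eq (k+l) k l le_rfl hk hl ↑x ↑y hx hy heq hkmin hlmin)

lemma P_surj_N2 {y : ↥(N1 ∪ N2)} (hy : (y:ℕ+) ∈ N2) :
    ∃ x : ↥(N1 ∪ N2), (x:ℕ+) ∈ N1 ∧ P x = y := by
  obtain ⟨x0, hx0, hcx0⟩ := N2_of_N1_surj hy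
  refine ⟨⟨x0, Or.inl hx0⟩, hx0, ?_⟩
  apply Subtype.ext
  show (↑(P ⟨x0, Or.inl hx0⟩) : ℕ+) = ↑y
  rw [P_coe_N1 P hP hx0]
  exact hcx0

lemma P_one {x : ↥(N1 ∪ N2)} (hx : (x:ℕ+) = 1) : (↑(P x) : ℕ+) = 4 := by
  have h1 : collatz (x:ℕ+) ∈ N1 ∪ N2 := by rw [hx, collatz_one]; exact Or.inr four_mem_N2
  rw [firstReturn_step1 (hP x) h1, hx, collatz_one]

lemma P_four {x : ↥(N1 ∪ N2)} (hx : (x:ℕ+) = 4) : (↑(P x) : ℕ+) = 1 := by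
  have h1 : collatz (x:ℕ+) ∉ N1 ∪ N2 := by rw [hx, collatz_four]; exact two_not_mem
  have h2 : collatz (collatz (x:ℕ+)) ∈ N1 ∪ N2 := by
    rw [hx, collatz_four, collatz_two]; exact Or.inl one_mem_N1
  rw [firstReturn_step2 (hP x) h1 h2, hx, collatz_four, collatz_two]

lemma P_iter_index (x : ↥(N1 ∪ N2)) : ∀ j : ℕ, ∃ m : ℕ, j ≤ m ∧
    (↑(P^[j] x) : ℕ+) = collatz^[m] ↑x := by
  intro j
  induction j with
  | zero => exact ⟨0, le_rfl, rfl⟩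
  | succ j ih =>
    obtain ⟨m, hjm, hm⟩ := ih
    obtain ⟨k, hk, _, hky, _⟩ := hP (P^[j] x)
    refine ⟨k + m, by omega, ?_⟩
    rw [Function.iterate_succ_apply']
    rw [Function.iterate_add_apply, ← hm]
    exact hky

lemma reach_cycle (hC : ∀ m : ℕ+, (1:ℕ+) ∈ orbit collatz m) (x : ↥(N1 ∪ N2)) :
    ∃ k : ℕ, (↑(P^[k] x) : ℕ+) = 1 ∨ (↑(P^[k] x) : ℕ+) = 4 := by
  obtain ⟨r, hr⟩ := hC ↑x
  obtain ⟨m, hrm, hm⟩ := P_iter_index P hP x r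
  refine ⟨r, ?_⟩
  have hr' : collatz^[r] (x:ℕ+) = 1 := hr
  have : (↑(P^[r] x) : ℕ+) = collatz^[m - r] (1:ℕ+) := by
    rw [hm, ← hr', ← Function.iterate_add_apply]
    congr 1; omega
  rcases iterate_of_one (m - r) with h1 | h1 | h1
  · left; rw [this, h1]
  · right; rw [this, h1]
  · exfalso
    have h2 : (↑(P^[r] x) : ℕ+) ∈ N1 ∪ N2 := (P^[r] x).2
    rw [this, h1] at h2
    exact two_not_mem h2

end Pmap

lemma N1_N2_disjoint {n : ℕ+} (h1 : n ∈ N1) (h2 : n ∈ N2) : False := by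
  have := N1_odd h1
  have := N2_even h2
  omega


variable {H : Type*} [NormedAddCommGroup H] [InnerProductSpace ℂ H] [CompleteSpace H]
variable {ι : Type*} (b : HilbertBasis ι ℂ H)

lemma inner_basis [DecidableEq ι] (i j : ι) : ⟪b i, b j⟫_ℂ = if i = j then 1 else 0 := by
  have := orthonormal_iff_ite.mp b.orthonormal i j
  simpa using this

lemma eq_zero_of_forall_inner (u : H) (h : ∀ i, ⟪b i, u⟫_ℂ = 0) : u = 0 := by
  have h0 : b.repr u = 0 := by
    ext i
    rw [b.repr_apply_apply]
    simpa using h i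
  have := congrArg b.repr.symm h0
  simpa using this

lemma clm_ext_basis {A B : H →L[ℂ] H} (h : ∀ i, A (b i) = B (b i)) : A = B := by
  refine ContinuousLinearMap.ext_on (s := Set.range b) ?_ ?_
  · exact Submodule.dense_iff_topologicalClosure_eq_top.mpr b.dense_span
  · rintro x ⟨i, rfl⟩
    exact h i

lemma mem_closure_span_iff (E : Set ι) (v : H) :
    v ∈ (Submodule.span ℂ (b '' E)).topologicalClosure ↔ ∀ i ∉ E, ⟪b i, v⟫_ℂ = 0 := by
  constructor
  · intro hv i hi
    have hcont : IsClosed {w : H | ⟪b i, w⟫_ℂ = 0} :=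
      isClosed_eq (innerSL ℂ (b i)).continuous continuous_const
    have hsub : (Submodule.span ℂ (b '' E) : Set H) ⊆ {w : H | ⟪b i, w⟫_ℂ = 0} := by
      intro w hw
      induction hw using Submodule.span_induction with
      | mem x hx =>
        obtain ⟨j, hj, rfl⟩ := hx
        show ⟪(b i : H), b j⟫_ℂ = 0
        exact b.orthonormal.2 (fun hij => hi (hij ▸ hj))
      | zero => simp
      | add x y _ _ hx hy => simp only [Set.mem_setOf_eq, inner_add_right] at *; rw [hx, hy]; ring
      | smul a x _ hx => simp only [Set.mem_setOf_eq, inner_smul_right] at *; rw [hx]; ring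
    have : v ∈ closure (Submodule.span ℂ (b '' E) : Set H) := hv
    exact (hcont.closure_subset_iff.mpr hsub) this
  · intro h
    have hsum := b.hasSum_repr v
    refine mem_closure_of_tendsto hsum (Filter.Eventually.of_forall ?_)
    intro s
    refine Submodule.sum_mem _ ?_
    intro i _
    by_cases hi : i ∈ E
    · exact Submodule.smul_mem _ _ (Submodule.subset_span ⟨i, hi, rfl⟩)
    · rw [b.repr_apply_apply, h i hi, zero_smul]
      exact Submodule.zero_mem _

section Proj

variable (M : Submodule ℂ H) [CompleteSpace M]

local notation "Q" => M.subtypeL ∘L Submodule.orthogonalProjectionOnto M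

lemma Q_mem (u : H) : Q u ∈ M := (Submodule.orthogonalProjectionOnto M u).2

lemma Q_eq_self {u : H} (hu : u ∈ M) : Q u = u := by
  show (↑(Submodule.orthogonalProjectionOnto M u) : H) = u
  rw [show u = ↑(⟨u, hu⟩ : M) from rfl, Submodule.orthogonalProjectionOnto_mem_subspace_eq_self]

lemma Q_perp {u : H} (hu : u ∈ Mᗮ) : Q u = 0 := by
  show (↑(Submodule.orthogonalProjectionOnto M u) : H) = 0
  rw [Submodule.orthogonalProjectionOnto_apply_of_mem_orthogonal hu]
  rfl

lemma Q_inner_symm (u v : H) : ⟪Q u, v⟫_ℂ = ⟪u, Q v⟫_ℂ := by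
  have hsa : ContinuousLinearMap.adjoint Q = Q :=
    ContinuousLinearMap.isSelfAdjoint_iff'.mp (isSelfAdjoint_starProjection M)
  conv_lhs => rw [← hsa]
  exact ContinuousLinearMap.adjoint_inner_left Q v u

lemma Q_comm (T : H →L[ℂ] H) (hT : ∀ x ∈ M, T x ∈ M)
    (hT' : ∀ x ∈ M, ContinuousLinearMap.adjoint T x ∈ M) (u : H) :
    Q (T u) = T (Q u) := by
  have hperp : T (u - Q u) ∈ Mᗮ := by
    rw [Submodule.mem_orthogonal]
    intro m hm
    rw [← ContinuousLinearMap.adjoint_inner_left]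
    exact (Submodule.mem_orthogonal _ _).mp (Submodule.sub_starProjection_mem_orthogonal (K := M) u)
      _ (hT' m hm)
  have h1 : Q (T (Q u)) = T (Q u) := Q_eq_self M (hT _ (Q_mem M u))
  have h2 : Q (T (u - Q u)) = 0 := Q_perp M hperp
  have : T u = T (Q u) + T (u - Q u) := by rw [← map_add]; congr 1; abel
  rw [this, map_add, h1, h2, add_zero]

end Proj

section Main

open scoped InnerProductSpace

local postfix:1000 "†" => ContinuousLinearMap.adjoint

variable {H : Type*} [NormedAddCommGroup H] [InnerProductSpace ℂ H] [CompleteSpace H]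
variable (b : HilbertBasis ↥(N1 ∪ N2) ℂ H)
variable (P : ↥(N1 ∪ N2) → ↥(N1 ∪ N2))
variable (hP : ∀ x : ↥(N1 ∪ N2), IsFirstReturn collatz (N1 ∪ N2) ↑x ↑(P x))
variable (T1 T2 : H →L[ℂ] H)
variable (hT1 : ∀ x : ↥(N1 ∪ N2), ((x : ℕ+) ∈ N1 → T1 (b x) = b (P x)) ∧
      ((x : ℕ+) ∈ N2 → T1 (b x) = 0))
variable (hT2 : ∀ x : ↥(N1 ∪ N2), ((x : ℕ+) ∈ N2 → T2 (b x) = b (P x)) ∧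
      ((x : ℕ+) ∈ N1 → T2 (b x) = 0))

lemma ne_of_parts {u w : ↥(N1 ∪ N2)} (hu : (u:ℕ+) ∈ N1) (hw : (w:ℕ+) ∈ N2) : u ≠ w :=
  fun h => N1_N2_disjoint (h ▸ hu) hw

include hP hT1 in
lemma T1adj_zero {x : ↥(N1 ∪ N2)} (hx : (x:ℕ+) ∈ N1) : (T1†) (b x) = 0 := by
  apply eq_zero_of_forall_inner b
  intro z
  rw [ContinuousLinearMap.adjoint_inner_right]
  rcases z.2 with hz | hz
  · rw [(hT1 z).1 hz, inner_basis]
    exact if_neg (fun h => N1_N2_disjoint hx (by rw [← h]; exact P_mem_N2 P hP hz))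
  · rw [(hT1 z).2 hz, inner_zero_left]

include hP hT1 in
lemma T1adj_P {x : ↥(N1 ∪ N2)} (hx : (x:ℕ+) ∈ N1) : (T1†) (b (P x)) = b x := by
  rw [← sub_eq_zero]
  apply eq_zero_of_forall_inner b
  intro z
  rw [inner_sub_right, ContinuousLinearMap.adjoint_inner_right]
  rcases z.2 with hz | hz
  · rw [(hT1 z).1 hz, inner_basis, inner_basis]
    by_cases hzx : z = x
    · subst hzx; rw [if_pos rfl, if_pos rfl]; ring
    · rw [if_neg (fun h => hzx (P_inj_N1 P hP hz hx h)), if_neg hzx]; ring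
  · rw [(hT1 z).2 hz, inner_zero_left, inner_basis,
      if_neg (fun h => (ne_of_parts hx hz) h.symm)]
    ring

include hP hT2 in
lemma T2adj_P {x : ↥(N1 ∪ N2)} (hx : (x:ℕ+) ∈ N2) : (T2†) (b (P x)) = b x := by
  rw [← sub_eq_zero]
  apply eq_zero_of_forall_inner b
  intro z
  rw [inner_sub_right, ContinuousLinearMap.adjoint_inner_right]
  rcases z.2 with hz | hz
  · rw [(hT2 z).2 hz, inner_zero_left, inner_basis,
      if_neg (fun h => (ne_of_parts hz hx) h)]
    ring
  · rw [(hT2 z).1 hz, inner_basis, inner_basis]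
    by_cases hzx : z = x
    · subst hzx; rw [if_pos rfl, if_pos rfl]; ring
    · rw [if_neg (fun h => hzx (P_inj_N2 P hP hz hx h)), if_neg hzx]; ring

include hP hT1 hT2 in
lemma easy_dir (S1 S2 : H →L[ℂ] H)
    (hS1 : S1 = (T1†) * (T2†)) (hS2 : S2 = (T2†))
    (hirr : ∀ M : Submodule ℂ H, IsClosed (M : Set H) →
      (∀ A ∈ CstarGen {S1, S2}, ∀ x ∈ M, A x ∈ M ∧ (A†) x ∈ M) →
      M = ⊥ ∨ M = ⊤) :
    ∀ m : ℕ+, (1 : ℕ+) ∈ orbit collatz m := by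
  by_contra hC
  push_neg at hC
  obtain ⟨m, hm⟩ := hC
  set E : Set ↥(N1 ∪ N2) := {z | (1:ℕ+) ∈ orbit collatz ↑z} with hEdef
  set M : Submodule ℂ H := (Submodule.span ℂ (b '' E)).topologicalClosure with hMdef
  have hMclosed : IsClosed (M : Set H) := Submodule.isClosed_topologicalClosure _
  have hEP : ∀ z : ↥(N1 ∪ N2), z ∈ E → P z ∈ E := by
    intro z hz
    obtain ⟨k, _, _, hky, _⟩ := hP z
    show (1:ℕ+) ∈ orbit collatz ↑(P z)
    rw [hky]
    exact one_mem_orbit_shift hz k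
  have hEPinv : ∀ z : ↥(N1 ∪ N2), P z ∈ E → z ∈ E := by
    intro z hz
    obtain ⟨k, _, _, hky, _⟩ := hP z
    have : (1:ℕ+) ∈ orbit collatz (collatz^[k] ↑z) := by rw [← hky]; exact hz
    exact one_mem_orbit_unshift this
  have hbE : ∀ x : ↥(N1 ∪ N2), x ∈ E → b x ∈ M :=
    fun x hx => Submodule.le_topologicalClosure _ (Submodule.subset_span ⟨x, hx, rfl⟩)
  have hlift : ∀ (T : H →L[ℂ] H), (∀ x : ↥(N1 ∪ N2), x ∈ E → T (b x) ∈ M) →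
      ∀ v ∈ M, T v ∈ M := by
    intro T hTb v hv
    have hsub : (Submodule.span ℂ (b '' E) : Set H) ⊆ T ⁻¹' (M : Set H) := by
      intro w hw
      induction hw using Submodule.span_induction with
      | mem u hu =>
        obtain ⟨x, hx, rfl⟩ := hu
        exact hTb x hx
      | zero => show T 0 ∈ M; rw [map_zero]; exact M.zero_mem
      | add u w _ _ hu hw => show T (u + w) ∈ M; rw [map_add]; exact M.add_mem hu hw
      | smul a u _ hu => show T (a • u) ∈ M; rw [map_smul]; exact M.smul_mem a hu
    have hv' : v ∈ closure (Submodule.span ℂ (b '' E) : Set H) := by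
      rw [← Submodule.topologicalClosure_coe]; exact hv
    exact (hMclosed.preimage T.continuous).closure_subset_iff.mpr hsub hv'
  have hT1b : ∀ x : ↥(N1 ∪ N2), x ∈ E → T1 (b x) ∈ M := by
    intro x hx
    rcases x.2 with h | h
    · rw [(hT1 x).1 h]; exact hbE _ (hEP x hx)
    · rw [(hT1 x).2 h]; exact M.zero_mem
  have hT2b : ∀ x : ↥(N1 ∪ N2), x ∈ E → T2 (b x) ∈ M := by
    intro x hx
    rcases x.2 with h | h
    · rw [(hT2 x).2 h]; exact M.zero_mem
    · rw [(hT2 x).1 h]; exact hbE _ (hEP x hx)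
  have hT1ab : ∀ x : ↥(N1 ∪ N2), x ∈ E → (T1†) (b x) ∈ M := by
    intro x hx
    rcases x.2 with h | h
    · rw [T1adj_zero b P hP T1 hT1 h]; exact M.zero_mem
    · obtain ⟨w, hw, hPw⟩ := P_surj_N2 P hP h
      rw [← hPw, T1adj_P b P hP T1 hT1 hw]
      exact hbE _ (hEPinv w (by rw [hPw]; exact hx))
  have hT2ab : ∀ x : ↥(N1 ∪ N2), x ∈ E → (T2†) (b x) ∈ M := by
    intro x hx
    rw [hMdef, mem_closure_span_iff]
    intro z hz
    rw [ContinuousLinearMap.adjoint_inner_right]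
    rcases z.2 with h | h
    · rw [(hT2 z).2 h, inner_zero_left]
    · rw [(hT2 z).1 h, inner_basis]
      refine if_neg (fun heq => hz ?_)
      exact hEPinv z (by rw [heq]; exact hx)
  have hMT1 := hlift T1 hT1b
  have hMT2 := hlift T2 hT2b
  have hMT1a := hlift (T1†) hT1ab
  have hMT2a := hlift (T2†) hT2ab
  have hadj : ∀ A ∈ NonUnitalStarAlgebra.adjoin ℂ {S1, S2},
      (∀ v ∈ M, A v ∈ M) ∧ (∀ v ∈ M, (A†) v ∈ M) := by
    intro A hA
    induction hA using NonUnitalStarAlgebra.adjoin_induction with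
    | mem x hx =>
      rcases hx with rfl | hx
      · constructor
        · intro v hv
          rw [hS1, ContinuousLinearMap.mul_apply]
          exact hMT1a _ (hMT2a v hv)
        · intro v hv
          rw [hS1, ← ContinuousLinearMap.star_eq_adjoint, star_mul,
            ← ContinuousLinearMap.star_eq_adjoint, ← ContinuousLinearMap.star_eq_adjoint,
            star_star, star_star, ContinuousLinearMap.mul_apply]
          exact hMT2 _ (hMT1 v hv)
      · rcases hx with rfl
        constructor
        · intro v hv; rw [hS2]; exact hMT2a v hv
        · intro v hv
          rw [hS2, ContinuousLinearMap.adjoint_adjoint]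
          exact hMT2 v hv
    | add x y hx hy px py =>
      refine ⟨fun v hv => ?_, fun v hv => ?_⟩
      · rw [ContinuousLinearMap.add_apply]; exact M.add_mem (px.1 v hv) (py.1 v hv)
      · rw [← ContinuousLinearMap.star_eq_adjoint, star_add,
          ContinuousLinearMap.add_apply, ContinuousLinearMap.star_eq_adjoint,
          ContinuousLinearMap.star_eq_adjoint]
        exact M.add_mem (px.2 v hv) (py.2 v hv)
    | zero =>
      refine ⟨fun v hv => ?_, fun v hv => ?_⟩
      · rw [ContinuousLinearMap.zero_apply]; exact M.zero_mem
      · rw [← ContinuousLinearMap.star_eq_adjoint, star_zero,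
          ContinuousLinearMap.zero_apply]
        exact M.zero_mem
    | mul x y hx hy px py =>
      refine ⟨fun v hv => ?_, fun v hv => ?_⟩
      · rw [ContinuousLinearMap.mul_apply]; exact px.1 _ (py.1 v hv)
      · rw [← ContinuousLinearMap.star_eq_adjoint, star_mul,
          ContinuousLinearMap.mul_apply, ContinuousLinearMap.star_eq_adjoint,
          ContinuousLinearMap.star_eq_adjoint]
        exact py.2 _ (px.2 v hv)
    | smul c x hx px =>
      refine ⟨fun v hv => ?_, fun v hv => ?_⟩
      · rw [ContinuousLinearMap.smul_apply]; exact M.smul_mem c (px.1 v hv)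
      · rw [← ContinuousLinearMap.star_eq_adjoint, star_smul,
          ContinuousLinearMap.smul_apply, ContinuousLinearMap.star_eq_adjoint]
        exact M.smul_mem _ (px.2 v hv)
    | star x hx px =>
      refine ⟨fun v hv => ?_, fun v hv => ?_⟩
      · rw [ContinuousLinearMap.star_eq_adjoint]; exact px.2 v hv
      · rw [← ContinuousLinearMap.star_eq_adjoint, star_star]; exact px.1 v hv
  have hgood : ∀ A ∈ CstarGen {S1, S2}, ∀ x ∈ M, A x ∈ M ∧ (A†) x ∈ M := by
    intro A hA v hv
    constructor
    · have hcl : IsClosed {B : H →L[ℂ] H | B v ∈ M} :=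
        hMclosed.preimage (ContinuousLinearMap.apply ℂ H v).continuous
      exact hcl.closure_subset_iff.mpr (fun B hB => (hadj B hB).1 v hv) hA
    · have hcl : IsClosed {B : H →L[ℂ] H | (B†) v ∈ M} := by
        have : Continuous (fun B : H →L[ℂ] H => (B†) v) :=
          (ContinuousLinearMap.apply ℂ H v).continuous.comp
            (ContinuousLinearMap.adjoint : (H →L[ℂ] H) ≃ₗᵢ⋆[ℂ] (H →L[ℂ] H)).continuous
        exact hMclosed.preimage this
      exact hcl.closure_subset_iff.mpr (fun B hB => (hadj B hB).2 v hv) hA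
  rcases hirr M hMclosed hgood with hbot | htop
  · have h1E : (⟨1, Or.inl one_mem_N1⟩ : ↥(N1 ∪ N2)) ∈ E := ⟨0, rfl⟩
    have := hbE _ h1E
    rw [hbot] at this
    exact b.orthonormal.ne_zero _ ((Submodule.mem_bot ℂ).mp this)
  · obtain ⟨w, hwN1, k, hwk⟩ := orbit_meets_N1 m
    have hwE : (⟨w, Or.inl hwN1⟩ : ↥(N1 ∪ N2)) ∉ E := by
      intro hw
      apply hm
      refine one_mem_orbit_unshift (k := k) (x := m) ?_
      have : collatz^[k] m = w := hwk
      rw [this]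
      exact hw
    have hbw : b ⟨w, Or.inl hwN1⟩ ∈ M := by rw [htop]; trivial
    rw [hMdef, mem_closure_span_iff] at hbw
    have := hbw _ hwE
    rw [inner_basis, if_pos rfl] at this
    exact one_ne_zero this

include hP hT1 hT2 in
lemma hard_dir (S1 S2 : H →L[ℂ] H)
    (hS1 : S1 = (T1†) * (T2†)) (hS2 : S2 = (T2†))
    (hC : ∀ m : ℕ+, (1 : ℕ+) ∈ orbit collatz m) :
    ∀ M : Submodule ℂ H, IsClosed (M : Set H) →
      (∀ A ∈ CstarGen {S1, S2}, ∀ x ∈ M, A x ∈ M ∧ (A†) x ∈ M) →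
      M = ⊥ ∨ M = ⊤ := by
  intro M hMclosed hMinv
  haveI : CompleteSpace M := hMclosed.completeSpace_coe
  set Q : H →L[ℂ] H := M.subtypeL ∘L Submodule.orthogonalProjectionOnto M with hQdef
  have hS1mem : S1 ∈ CstarGen {S1, S2} :=
    subset_closure (NonUnitalStarAlgebra.subset_adjoin ℂ _ (Set.mem_insert _ _))
  have hS2mem : S2 ∈ CstarGen {S1, S2} :=
    subset_closure (NonUnitalStarAlgebra.subset_adjoin ℂ _
      (Set.mem_insert_of_mem _ rfl))
  -- invariance of M under T1, T2 and their adjoints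
  have hMT2 : ∀ v ∈ M, T2 v ∈ M := by
    intro v hv
    have : T2 = (S2†) := by rw [hS2, ContinuousLinearMap.adjoint_adjoint]
    rw [this]
    exact (hMinv S2 hS2mem v hv).2
  have hMT2a : ∀ v ∈ M, (T2†) v ∈ M := by
    intro v hv
    rw [← hS2]
    exact (hMinv S2 hS2mem v hv).1
  have hS1adj : (S1†) = T2 ∘L T1 := by
    rw [hS1, ContinuousLinearMap.mul_def, ContinuousLinearMap.adjoint_comp,
      ContinuousLinearMap.adjoint_adjoint, ContinuousLinearMap.adjoint_adjoint]
  have hT2aT2T1 : (T2†) ∘L (T2 ∘L T1) = T1 := by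
    apply clm_ext_basis b
    intro x
    rcases x.2 with h | h
    · rw [ContinuousLinearMap.comp_apply, ContinuousLinearMap.comp_apply,
        (hT1 x).1 h, (hT2 (P x)).1 (P_mem_N2 P hP h),
        T2adj_P b P hP T2 hT2 (P_mem_N2 P hP h)]
    · rw [ContinuousLinearMap.comp_apply, ContinuousLinearMap.comp_apply,
        (hT1 x).2 h, map_zero, map_zero]
  have hT1aT2aT2 : (T1†) ∘L ((T2†) ∘L T2) = (T1†) := by
    apply clm_ext_basis b
    intro x
    rcases x.2 with h | h
    · rw [ContinuousLinearMap.comp_apply, ContinuousLinearMap.comp_apply,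
        (hT2 x).2 h, map_zero, map_zero, T1adj_zero b P hP T1 hT1 h]
    · rw [ContinuousLinearMap.comp_apply, ContinuousLinearMap.comp_apply,
        (hT2 x).1 h, T2adj_P b P hP T2 hT2 h]
  have hMT1 : ∀ v ∈ M, T1 v ∈ M := by
    intro v hv
    have h1 : T1 v = (T2†) ((S1†) v) := by
      rw [hS1adj, ← ContinuousLinearMap.comp_apply, hT2aT2T1]
    rw [h1]
    exact hMT2a _ ((hMinv S1 hS1mem v hv).2)
  have hMT1a : ∀ v ∈ M, (T1†) v ∈ M := by
    intro v hv
    have h1 : (T1†) v = S1 (T2 v) := by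
      conv_lhs => rw [← hT1aT2aT2]
      rw [hS1]
      rfl
    rw [h1]
    exact (hMinv S1 hS1mem _ (hMT2 v hv)).1
  -- commutation of Q with T1, T2
  have hcomm1 : ∀ u, Q (T1 u) = T1 (Q u) := Q_comm M T1 hMT1 hMT1a
  have hcomm2 : ∀ u, Q (T2 u) = T2 (Q u) := Q_comm M T2 hMT2 hMT2a
  -- matrix entries
  have hoff : ∀ x y : ↥(N1 ∪ N2), (x:ℕ+) ∈ N1 → (y:ℕ+) ∈ N2 → ⟪b x, Q (b y)⟫_ℂ = 0 := by
    intro x y hx hy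
    obtain ⟨w, hw, hPw⟩ := P_surj_N2 P hP hy
    rw [← hPw, ← (hT1 w).1 hw, hcomm1, ← ContinuousLinearMap.adjoint_inner_left,
      T1adj_zero b P hP T1 hT1 hx, inner_zero_left]
  have hoff' : ∀ x y : ↥(N1 ∪ N2), (x:ℕ+) ∈ N2 → (y:ℕ+) ∈ N1 → ⟪b x, Q (b y)⟫_ℂ = 0 := by
    intro x y hx hy
    have h1 : ⟪b x, Q (b y)⟫_ℂ = (starRingEnd ℂ) ⟪b y, Q (b x)⟫_ℂ := by
      rw [inner_conj_symm, Q_inner_symm M]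
    rw [h1, hoff y x hy hx, map_zero]
  have hstep : ∀ x y : ↥(N1 ∪ N2),
      (((x:ℕ+) ∈ N1 ∧ (y:ℕ+) ∈ N1) ∨ ((x:ℕ+) ∈ N2 ∧ (y:ℕ+) ∈ N2)) →
      ⟪b (P x), Q (b (P y))⟫_ℂ = ⟪b x, Q (b y)⟫_ℂ := by
    rintro x y (⟨hx, hy⟩ | ⟨hx, hy⟩)
    · rw [← (hT1 x).1 hx, ← (hT1 y).1 hy, hcomm1,
        ← ContinuousLinearMap.adjoint_inner_left, (hT1 x).1 hx,
        T1adj_P b P hP T1 hT1 hx]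
    · rw [← (hT2 x).1 hx, ← (hT2 y).1 hy, hcomm2,
        ← ContinuousLinearMap.adjoint_inner_left, (hT2 x).1 hx,
        T2adj_P b P hP T2 hT2 hx]
  have hstep_diag : ∀ x : ↥(N1 ∪ N2), ⟪b (P x), Q (b (P x))⟫_ℂ = ⟪b x, Q (b x)⟫_ℂ := by
    intro x
    rcases x.2 with h | h
    · exact hstep x x (Or.inl ⟨h, h⟩)
    · exact hstep x x (Or.inr ⟨h, h⟩)
  have hdiag_iter : ∀ (k : ℕ) (x : ↥(N1 ∪ N2)), ⟪b (P^[k] x), Q (b (P^[k] x))⟫_ℂ = ⟪b x, Q (b x)⟫_ℂ := by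
    intro k
    induction k with
    | zero => intro x; rfl
    | succ k ih =>
      intro x
      rw [Function.iterate_succ_apply]
      rw [ih (P x), hstep_diag x]
  set oneI : ↥(N1 ∪ N2) := ⟨1, Or.inl one_mem_N1⟩ with honeI
  set fourI : ↥(N1 ∪ N2) := ⟨4, Or.inr four_mem_N2⟩ with hfourI
  have hPone : P oneI = fourI := Subtype.ext (P_one P hP rfl)
  have hPfour : P fourI = oneI := Subtype.ext (P_four P hP rfl)
  set c : ℂ := ⟪b oneI, Q (b oneI)⟫_ℂ with hcdef
  have h44 : ⟪b fourI, Q (b fourI)⟫_ℂ = c := by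
    rw [hcdef, ← hstep_diag oneI, hPone]
  have hreach : ∀ x : ↥(N1 ∪ N2), ∃ k, P^[k] x = oneI ∨ P^[k] x = fourI := by
    intro x
    obtain ⟨k, hk | hk⟩ := reach_cycle P hP hC x
    · exact ⟨k, Or.inl (Subtype.ext hk)⟩
    · exact ⟨k, Or.inr (Subtype.ext hk)⟩
  have hdiag : ∀ x : ↥(N1 ∪ N2), ⟪b x, Q (b x)⟫_ℂ = c := by
    intro x
    obtain ⟨k, hk | hk⟩ := hreach x
    · rw [← hdiag_iter k x, hk]
    · rw [← hdiag_iter k x, hk, h44]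
  have hpersist : ∀ (x : ↥(N1 ∪ N2)) (k j : ℕ),
      (P^[k] x = oneI ∨ P^[k] x = fourI) →
      (P^[k+j] x = oneI ∨ P^[k+j] x = fourI) := by
    intro x k j
    induction j with
    | zero => exact fun h => h
    | succ j ih =>
      intro h
      have := ih h
      rw [show k + (j+1) = (k+j) + 1 by omega, Function.iterate_succ_apply']
      rcases this with h1 | h1
      · rw [h1, hPone]; exact Or.inr rfl
      · rw [h1, hPfour]; exact Or.inl rfl
  have hoffdiag_aux : ∀ (n : ℕ) (x y : ↥(N1 ∪ N2)), x ≠ y →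
      (P^[n] x = oneI ∨ P^[n] x = fourI) → (P^[n] y = oneI ∨ P^[n] y = fourI) →
      ⟪b x, Q (b y)⟫_ℂ = 0 := by
    intro n
    induction n with
    | zero =>
      intro x y hne hx hy
      simp only [Function.iterate_zero, id] at hx hy
      rcases hx with rfl | rfl <;> rcases hy with rfl | rfl
      · exact absurd rfl hne
      · exact hoff _ _ one_mem_N1 four_mem_N2
      · exact hoff' _ _ four_mem_N2 one_mem_N1
      · exact absurd rfl hne
    | succ n ih =>
      intro x y hne hx hy
      rw [Function.iterate_succ_apply] at hx hy
      rcases x.2 with h1 | h1 <;> rcases y.2 with h2 | h2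
      · rw [← hstep x y (Or.inl ⟨h1, h2⟩)]
        exact ih (P x) (P y) (fun h => hne (P_inj_N1 P hP h1 h2 h)) hx hy
      · exact hoff x y h1 h2
      · exact hoff' x y h1 h2
      · rw [← hstep x y (Or.inr ⟨h1, h2⟩)]
        exact ih (P x) (P y) (fun h => hne (P_inj_N2 P hP h1 h2 h)) hx hy
  have hoffdiag : ∀ x y : ↥(N1 ∪ N2), x ≠ y → ⟪b x, Q (b y)⟫_ℂ = 0 := by
    intro x y hne
    obtain ⟨k1, hk1⟩ := hreach x
    obtain ⟨k2, hk2⟩ := hreach y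
    exact hoffdiag_aux (k1 + k2) x y hne
      (by rw [show k1 + k2 = k1 + k2 from rfl]; exact hpersist x k1 k2 hk1)
      (by rw [show k1 + k2 = k2 + k1 by omega]; exact hpersist y k2 k1 hk2)
  have hQb : ∀ y : ↥(N1 ∪ N2), Q (b y) = c • b y := by
    intro y
    rw [← sub_eq_zero]
    apply eq_zero_of_forall_inner b
    intro x
    rw [inner_sub_right, inner_smul_right]
    by_cases hxy : x = y
    · subst hxy
      rw [hdiag, inner_basis, if_pos rfl, mul_one, sub_self]
    · rw [hoffdiag x y hxy, inner_basis, if_neg hxy, mul_zero, sub_zero]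
  have hc2 : c * c = c := by
    have h1 : Q (Q (b oneI)) = Q (b oneI) := Q_eq_self M (Q_mem M _)
    rw [hQb, map_smul, hQb, smul_smul] at h1
    have h2 : (c * c - c) • b oneI = 0 := by rw [sub_smul, h1, sub_self]
    rcases smul_eq_zero.mp h2 with h | h
    · exact sub_eq_zero.mp h
    · exact absurd h (b.orthonormal.ne_zero oneI)
  have hc01 : c = 0 ∨ c = 1 := by
    rcases mul_eq_zero.mp (show c * (c - 1) = 0 by rw [mul_sub, mul_one, hc2, sub_self])
      with h | h
    · exact Or.inl h
    · exact Or.inr (sub_eq_zero.mp h)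
  rcases hc01 with hc | hc
  · left
    have hQ0 : Q = 0 := by
      apply clm_ext_basis b
      intro x
      rw [hQb, hc, zero_smul, ContinuousLinearMap.zero_apply]
    rw [Submodule.eq_bot_iff]
    intro v hv
    have h3 : Q v = v := Q_eq_self M hv
    rw [hQ0, ContinuousLinearMap.zero_apply] at h3
    exact h3.symm
  · right
    have hQ1 : Q = ContinuousLinearMap.id ℂ H := by
      apply clm_ext_basis b
      intro x
      rw [hQb, hc, one_smul, ContinuousLinearMap.id_apply]
    rw [Submodule.eq_top_iff']
    intro v
    have : Q v = v := by rw [hQ1]; rfl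
    rw [← this]
    exact Q_mem M v

end Main

end CollatzCuntzAux

/-- `C*(S₁,S₂)` has no non-trivial reducing subspaces iff the Collatz conjecture holds. -/
theorem irreducible_cuntz_iff_collatz {H : Type*} [NormedAddCommGroup H] [InnerProductSpace ℂ H]
    [CompleteSpace H] (b : HilbertBasis ↥(N1 ∪ N2) ℂ H)
    (P : ↥(N1 ∪ N2) → ↥(N1 ∪ N2))
    (hP : ∀ x : ↥(N1 ∪ N2), IsFirstReturn collatz (N1 ∪ N2) ↑x ↑(P x))
    (T1 T2 : H →L[ℂ] H)
    (hT1 : ∀ x : ↥(N1 ∪ N2), ((x : ℕ+) ∈ N1 → T1 (b x) = b (P x)) ∧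
      ((x : ℕ+) ∈ N2 → T1 (b x) = 0))
    (hT2 : ∀ x : ↥(N1 ∪ N2), ((x : ℕ+) ∈ N2 → T2 (b x) = b (P x)) ∧
      ((x : ℕ+) ∈ N1 → T2 (b x) = 0))
    (S1 S2 : H →L[ℂ] H)
    (hS1 : S1 = ContinuousLinearMap.adjoint T1 * ContinuousLinearMap.adjoint T2)
    (hS2 : S2 = ContinuousLinearMap.adjoint T2) :
    (∀ M : Submodule ℂ H, IsClosed (M : Set H) →
      (∀ A ∈ CstarGen {S1, S2}, ∀ x ∈ M, A x ∈ M ∧ ContinuousLinearMap.adjoint A x ∈ M) →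
      M = ⊥ ∨ M = ⊤) ↔
      ∀ m : ℕ+, (1 : ℕ+) ∈ orbit collatz m := by
  constructor
  · intro hirr
    exact CollatzCuntzAux.easy_dir b P hP T1 T2 hT1 hT2 S1 S2 hS1 hS2 hirr
  · intro hC
    exact CollatzCuntzAux.hard_dir b P hP T1 T2 hT1 hT2 S1 S2 hS1 hS2 hC
end

section
/- Let X be a countably infinite set and f : X → X a map satisfying the bounded condition with partition X = X_1 ⊔ ⋯ ⊔ X_k. Let H be a complex Hilbert space with orthonormal basis {e_x}_{x∈X} and T the unique bounded operator on H with T e_x = e_{f(x)} for all x ∈ X. Then for every x ∈ X, the closure of C*(T)·e_x is contained in the closed linear span of {e_y : y ∈ X, y ~ x}, where ~ is the orbit equivalence relation induced by f. -/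
open scoped InnerProductSpace


/-- For a map `f` on a countably infinite set satisfying the bounded condition, the
closure of `C*(T)·e_x` is contained in the closed linear span of `{e_y : y ~ x}`. -/
theorem cstar_single_orbit_span_general {X : Type*} [Countable X] [Infinite X]
    (f : X → X) (k : ℕ) (Xp : Fin k → Set X)
    (hdisj : ∀ i j, i ≠ j → Disjoint (Xp i) (Xp j))
    (hcover : (⋃ i, Xp i) = Set.univ)
    (hinj : ∀ i, Set.InjOn f (Xp i))
    {H : Type*} [NormedAddCommGroup H] [InnerProductSpace ℂ H] [CompleteSpace H]
    (b : HilbertBasis X ℂ H)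
    (T : H →L[ℂ] H) (hT : ∀ x : X, T (b x) = b (f x)) (x : X) :
    closure ((fun A => A (b x)) '' CstarGen {T}) ⊆
      closure ((Submodule.span ℂ (b '' {y : X | orbEquiv f y x}) : Submodule ℂ H) : Set H) := by
  classical
  set S : Set X := {y : X | orbEquiv f y x} with hSdef
  set N : Submodule ℂ H := (Submodule.span ℂ (b '' S)).topologicalClosure with hNdef
  have hNcoe : (N : Set H) = closure ((Submodule.span ℂ (b '' S) : Submodule ℂ H) : Set H) :=
    Submodule.topologicalClosure_coe _
  -- combinatorial facts about S
  have hfS : ∀ y ∈ S, f y ∈ S := by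
    rintro y ⟨p, ⟨a, ha⟩, hp⟩
    refine ⟨f p, ⟨a, ?_⟩, ?_⟩
    · show f^[a] (f y) = f p
      rw [← Function.iterate_succ_apply, Function.iterate_succ_apply']
      exact congrArg f ha
    · obtain ⟨c, hc⟩ := hp
      exact ⟨c + 1, by show f^[c+1] x = f p; rw [Function.iterate_succ_apply']; exact congrArg f hc⟩
  have hfS' : ∀ z, f z ∈ S → z ∈ S := by
    rintro z ⟨p, ⟨a, ha⟩, hp⟩
    exact ⟨p, ⟨a + 1, by show f^[a+1] z = p; rw [Function.iterate_succ_apply]; exact ha⟩, hp⟩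
  -- forward characterization
  have hfwd : ∀ v ∈ N, ∀ z ∉ S, ⟪b z, v⟫_ℂ = 0 := by
    intro v hv z hz
    have hle : Submodule.span ℂ (b '' S) ≤ LinearMap.ker (innerSL ℂ (b z) : H →ₗ[ℂ] ℂ) := by
      rw [Submodule.span_le]
      rintro w ⟨y, hy, rfl⟩
      have hne : z ≠ y := fun h => hz (h ▸ hy)
      simpa using b.orthonormal.2 hne
    have hcl : IsClosed ((LinearMap.ker (innerSL ℂ (b z) : H →ₗ[ℂ] ℂ) :
        Submodule ℂ H) : Set H) := ContinuousLinearMap.isClosed_ker (innerSL ℂ (b z))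
    simpa using Submodule.topologicalClosure_minimal _ hle hcl hv
  -- backward characterization
  have hbwd : ∀ v : H, (∀ z ∉ S, ⟪b z, v⟫_ℂ = 0) → v ∈ N := by
    intro v hv
    have hs := b.hasSum_repr v
    have hterm : ∀ i : X, b.repr v i • b i ∈ N := by
      intro i
      by_cases hi : i ∈ S
      · exact N.smul_mem _ (Submodule.le_topologicalClosure _
          (Submodule.subset_span ⟨i, hi, rfl⟩))
      · rw [b.repr_apply_apply, hv i hi, zero_smul]; exact N.zero_mem
    refine (Submodule.isClosed_topologicalClosure
      (Submodule.span ℂ (b '' S))).mem_of_tendsto hs ?_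
    exact Filter.Eventually.of_forall fun s => N.sum_mem fun i _ => hterm i
  -- T preserves N
  have hTN : ∀ v ∈ N, T v ∈ N := by
    intro v hv
    have hspan : ∀ w ∈ Submodule.span ℂ (b '' S), T w ∈ Submodule.span ℂ (b '' S) := by
      intro w hw
      induction hw using Submodule.span_induction with
      | mem w hw =>
        obtain ⟨y, hy, rfl⟩ := hw
        rw [hT y]
        exact Submodule.subset_span ⟨f y, hfS y hy, rfl⟩
      | zero => simpa using Submodule.zero_mem _
      | add u w _ _ hu hw => rw [map_add]; exact Submodule.add_mem _ hu hw
      | smul r u _ hu => rw [map_smul]; exact Submodule.smul_mem _ _ hu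
    have hv' : v ∈ closure ((Submodule.span ℂ (b '' S) : Submodule ℂ H) : Set H) := by
      have : v ∈ (N : Set H) := hv
      rwa [hNcoe] at this
    have h1 : T v ∈ closure (T '' ((Submodule.span ℂ (b '' S) : Submodule ℂ H) : Set H)) :=
      image_closure_subset_closure_image T.continuous ⟨v, hv', rfl⟩
    have h2 : T v ∈ closure ((Submodule.span ℂ (b '' S) : Submodule ℂ H) : Set H) := by
      refine closure_mono ?_ h1
      rintro w ⟨u, hu, rfl⟩
      exact hspan u hu
    show T v ∈ (N : Set H)
    rwa [hNcoe]
  -- star T preserves N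
  have hTstarN : ∀ v ∈ N, star T v ∈ N := by
    intro v hv
    refine hbwd _ fun z hz => ?_
    rw [ContinuousLinearMap.star_eq_adjoint, ContinuousLinearMap.adjoint_inner_right, hT z]
    exact hfwd v hv (f z) fun h => hz (hfS' z h)
  -- main induction
  have key : ∀ A ∈ NonUnitalStarAlgebra.adjoin ℂ ({T} : Set (H →L[ℂ] H)),
      ∀ v ∈ N, A v ∈ N ∧ star A v ∈ N := by
    intro A hA
    induction hA using NonUnitalStarAlgebra.adjoin_induction with
    | mem A hA =>
      rw [Set.mem_singleton_iff] at hA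
      subst hA
      exact fun v hv => ⟨hTN v hv, hTstarN v hv⟩
    | add A B _ _ hA hB =>
      intro v hv
      constructor
      · rw [ContinuousLinearMap.add_apply]
        exact N.add_mem (hA v hv).1 (hB v hv).1
      · rw [star_add, ContinuousLinearMap.add_apply]
        exact N.add_mem (hA v hv).2 (hB v hv).2
    | zero => intro v hv; simp only [ContinuousLinearMap.zero_apply, star_zero]
              exact ⟨N.zero_mem, N.zero_mem⟩
    | mul A B _ _ hA hB =>
      intro v hv
      constructor
      · rw [ContinuousLinearMap.mul_apply]
        exact (hA _ (hB v hv).1).1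
      · rw [star_mul, ContinuousLinearMap.mul_apply]
        exact (hB _ (hA v hv).2).2
    | smul r A _ hA =>
      intro v hv
      constructor
      · rw [ContinuousLinearMap.smul_apply]
        exact N.smul_mem _ (hA v hv).1
      · rw [star_smul, ContinuousLinearMap.smul_apply]
        exact N.smul_mem _ (hA v hv).2
    | star A _ hA =>
      intro v hv
      exact ⟨(hA v hv).2, by rw [star_star]; exact (hA v hv).1⟩
  -- x ∈ S, so b x ∈ N
  have hxS : x ∈ S := ⟨x, ⟨0, rfl⟩, ⟨0, rfl⟩⟩
  have hbx : b x ∈ N := Submodule.le_topologicalClosure _ (Submodule.subset_span ⟨x, hxS, rfl⟩)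
  -- conclude
  have himg : (fun A : H →L[ℂ] H => A (b x)) '' CstarGen {T} ⊆ (N : Set H) := by
    rintro w ⟨A, hA, rfl⟩
    have hcont : Continuous fun B : H →L[ℂ] H => B (b x) :=
      (ContinuousLinearMap.apply ℂ H (b x)).continuous
    have h1 : A (b x) ∈ closure ((fun B : H →L[ℂ] H => B (b x)) ''
        (NonUnitalStarAlgebra.adjoin ℂ ({T} : Set (H →L[ℂ] H)) : Set (H →L[ℂ] H))) :=
      image_closure_subset_closure_image hcont ⟨A, hA, rfl⟩
    have h2 : (fun B : H →L[ℂ] H => B (b x)) ''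
        (NonUnitalStarAlgebra.adjoin ℂ ({T} : Set (H →L[ℂ] H)) : Set (H →L[ℂ] H)) ⊆
        (N : Set H) := by
      rintro w ⟨B, hB, rfl⟩
      exact (key B hB (b x) hbx).1
    have h3 := closure_mono h2 h1
    rwa [(Submodule.isClosed_topologicalClosure
      (Submodule.span ℂ (b '' S))).closure_eq] at h3
  rw [← hNcoe]
  exact closure_minimal himg (Submodule.isClosed_topologicalClosure _)
end

section
/- Let X be a countably infinite set and f : X → X a map satisfying the bounded condition with partition X = X_1 ⊔ ⋯ ⊔ X_k. Let H be a complex Hilbert space with orthonormal basis {e_x}_{x∈X} and, for 1 ≤ i ≤ k, let T_i be the bounded operator with T_i e_x = e_{f(x)} if x ∈ X_i and T_i e_x = 0 otherwise. Then the following are equivalent: (i) there exists x ∈ X such that e_x is a cyclic vector for C*(T_1,…,T_k); (ii) x ~ y for every x, y ∈ X, where ~ is the orbit equivalence relation induced by f. -/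
open scoped InnerProductSpace

theorem orbEquiv_refl' {X : Type*} (f : X → X) (x : X) : orbEquiv f x x :=
  ⟨x, ⟨0, rfl⟩, ⟨0, rfl⟩⟩

theorem orbEquiv_symm' {X : Type*} {f : X → X} {x y : X} (h : orbEquiv f x y) :
    orbEquiv f y x := by
  obtain ⟨w, h1, h2⟩ := h; exact ⟨w, h2, h1⟩

theorem orbEquiv_trans' {X : Type*} {f : X → X} {x y z : X}
    (h1 : orbEquiv f x y) (h2 : orbEquiv f y z) : orbEquiv f x z := by
  obtain ⟨w, ⟨a, ha⟩, ⟨c, hc⟩⟩ := h1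
  obtain ⟨v, ⟨d, hd⟩, ⟨e, he⟩⟩ := h2
  refine ⟨f^[d] w, ⟨d + a, ?_⟩, ⟨c + e, ?_⟩⟩
  · simp only at ha hc hd he ⊢
    rw [Function.iterate_add_apply, ha]
  · simp only at ha hc hd he ⊢
    calc f^[c + e] z = f^[c] (f^[e] z) := Function.iterate_add_apply f c e z
      _ = f^[c] (f^[d] y) := by rw [he, ← hd]
      _ = f^[c + d] y := (Function.iterate_add_apply f c d y).symm
      _ = f^[d + c] y := by rw [Nat.add_comm]
      _ = f^[d] (f^[c] y) := Function.iterate_add_apply f d c y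
      _ = f^[d] w := by rw [hc]

theorem orbEquiv_step' {X : Type*} {f : X → X} {x z : X} (h : orbEquiv f x z) :
    orbEquiv f x (f z) := by
  obtain ⟨w, ⟨a, ha⟩, ⟨c, hc⟩⟩ := h
  simp only at ha hc
  refine ⟨f w, ⟨a + 1, ?_⟩, ⟨c, ?_⟩⟩
  · simp only [Function.iterate_succ_apply', ha]
  · show f^[c] (f z) = f w
    rw [← Function.iterate_succ_apply, Function.iterate_succ_apply', hc]

theorem orbEquiv_back' {X : Type*} {f : X → X} {x w z : X} (hw : f w = z)
    (h : orbEquiv f x z) : orbEquiv f x w := by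
  obtain ⟨p, hp1, ⟨c, hc⟩⟩ := h
  simp only at hc
  exact ⟨p, hp1, ⟨c + 1, by show f^[c+1] w = p; rw [Function.iterate_succ_apply, hw, hc]⟩⟩

/-- For a map `f` satisfying the bounded condition, some basis vector `e_x` is cyclic for
`C*(T₁,…,T_k)` iff all points of `X` are orbit equivalent. -/
theorem cyclic_general_iff_orbit_equiv {X : Type*} [Countable X] [Infinite X]
    (f : X → X) (k : ℕ) (Xp : Fin k → Set X)
    (hdisj : ∀ i j, i ≠ j → Disjoint (Xp i) (Xp j))
    (hcover : (⋃ i, Xp i) = Set.univ)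
    (hinj : ∀ i, Set.InjOn f (Xp i))
    {H : Type*} [NormedAddCommGroup H] [InnerProductSpace ℂ H] [CompleteSpace H]
    (b : HilbertBasis X ℂ H)
    (Ts : Fin k → H →L[ℂ] H)
    (hTs : ∀ i (x : X), (x ∈ Xp i → Ts i (b x) = b (f x)) ∧ (x ∉ Xp i → Ts i (b x) = 0)) :
    (∃ x : X, closure ((fun A => A (b x)) '' CstarGen (Set.range Ts)) = Set.univ) ↔
      ∀ x y : X, orbEquiv f x y := by
  classical
  have hmem : ∀ z : X, ∃ i, z ∈ Xp i := by
    intro z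
    have : z ∈ ⋃ i, Xp i := hcover ▸ Set.mem_univ z
    simpa using this
  have bext : ∀ v w : H, (∀ u : X, ⟪b u, v⟫_ℂ = ⟪b u, w⟫_ℂ) → v = w := by
    intro v w h
    apply b.repr.injective
    apply lp.ext
    funext u
    rw [b.repr_apply_apply, b.repr_apply_apply, h u]
  have hinner : ∀ u z : X, ⟪b u, b z⟫_ℂ = if u = z then 1 else 0 := fun u z =>
    orthonormal_iff_ite.mp b.orthonormal u z
  have hadj : ∀ (i : Fin k) (z : X), z ∈ Xp i → star (Ts i) (b (f z)) = b z := by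
    intro i z hz
    apply bext
    intro u
    rw [ContinuousLinearMap.star_eq_adjoint, ContinuousLinearMap.adjoint_inner_right]
    by_cases hu : u ∈ Xp i
    · rw [(hTs i u).1 hu, hinner, hinner]
      by_cases huz : u = z
      · simp [huz]
      · have hne : f u ≠ f z := fun h => huz ((hinj i) hu hz h)
        simp [huz, hne]
    · rw [(hTs i u).2 hu, hinner]
      have hne : u ≠ z := fun h => hu (h ▸ hz)
      simp [hne]
  have hadj0 : ∀ (i : Fin k) (w : X), (∀ z ∈ Xp i, f z ≠ w) → star (Ts i) (b w) = 0 := by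
    intro i w hw
    apply bext
    intro u
    rw [ContinuousLinearMap.star_eq_adjoint, ContinuousLinearMap.adjoint_inner_right,
      inner_zero_right]
    by_cases hu : u ∈ Xp i
    · rw [(hTs i u).1 hu, hinner]
      simp [hw u hu]
    · rw [(hTs i u).2 hu, inner_zero_left]
  set S : H →L[ℂ] H := ∑ i, Ts i with hS
  have hSapp : ∀ z : X, S (b z) = b (f z) := by
    intro z
    obtain ⟨i0, hi0⟩ := hmem z
    rw [hS, ContinuousLinearMap.sum_apply, Finset.sum_eq_single i0]
    · exact (hTs i0 z).1 hi0
    · intro j _ hj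
      exact (hTs j z).2 fun hzj => Set.disjoint_left.mp (hdisj j i0 hj) hzj hi0
    · intro h; exact absurd (Finset.mem_univ i0) h
  have hSpow : ∀ (m : ℕ) (z : X), (S ^ m) (b z) = b (f^[m] z) := by
    intro m
    induction m with
    | zero => intro z; simp
    | succ m ih =>
      intro z
      rw [pow_succ', ContinuousLinearMap.mul_apply, ih, hSapp, Function.iterate_succ_apply']
  set 𝒜 := NonUnitalStarAlgebra.adjoin ℂ (Set.range Ts) with h𝒜
  have hgen : ∀ i, Ts i ∈ 𝒜 := fun i =>
    NonUnitalStarAlgebra.subset_adjoin ℂ _ ⟨i, rfl⟩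
  have hSmem : S ∈ 𝒜 := hS ▸ sum_mem (fun i _ => hgen i)
  have hSpowmem : ∀ m : ℕ, S ^ (m + 1) ∈ 𝒜 := by
    intro m
    induction m with
    | zero => simpa using hSmem
    | succ m ih => rw [pow_succ]; exact mul_mem ih hSmem
  have hev : ∀ v : H, Continuous fun A : H →L[ℂ] H => A v := fun v =>
    continuous_id.clm_apply continuous_const
  constructor
  · -- forward direction
    rintro ⟨x, hx⟩
    set C : Set X := {z | orbEquiv f x z} with hC
    set K := (Submodule.span ℂ (b '' C)).topologicalClosure with hK
    have hKclosed : IsClosed (K : Set H) := Submodule.isClosed_topologicalClosure _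
    have hbK : ∀ z ∈ C, b z ∈ K := fun z hz =>
      Submodule.le_topologicalClosure _ (Submodule.subset_span ⟨z, hz, rfl⟩)
    have hmapsK : ∀ T : H →L[ℂ] H, (∀ z ∈ C, T (b z) ∈ K) → ∀ v ∈ K, T v ∈ K := by
      intro T hT v hv
      have h1 : ∀ w ∈ Submodule.span ℂ (b '' C), T w ∈ K := by
        intro w hw
        induction hw using Submodule.span_induction with
        | mem w hw => obtain ⟨z, hz, rfl⟩ := hw; exact hT z hz
        | zero => simp [zero_mem]
        | add w₁ w₂ _ _ ih₁ ih₂ => rw [map_add]; exact add_mem ih₁ ih₂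
        | smul c w _ ih => rw [map_smul]; exact Submodule.smul_mem K c ih
      have h2 : v ∈ closure (Submodule.span ℂ (b '' C) : Set H) := hv
      have h3 : T v ∈ closure (K : Set H) :=
        map_mem_closure T.continuous h2 fun w hw => h1 w hw
      rwa [hKclosed.closure_eq] at h3
    have hTK : ∀ i, ∀ v ∈ K, Ts i v ∈ K := by
      intro i
      apply hmapsK
      intro z hz
      by_cases hzi : z ∈ Xp i
      · rw [(hTs i z).1 hzi]; exact hbK _ (orbEquiv_step' hz)
      · rw [(hTs i z).2 hzi]; exact zero_mem K
    have hTsK : ∀ i, ∀ v ∈ K, star (Ts i) v ∈ K := by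
      intro i
      apply hmapsK
      intro z hz
      by_cases hex : ∃ w ∈ Xp i, f w = z
      · obtain ⟨w, hwi, hwz⟩ := hex
        rw [← hwz, hadj i w hwi]
        exact hbK _ (orbEquiv_back' hwz hz)
      · push_neg at hex
        rw [hadj0 i z hex]; exact zero_mem K
    have halg : ∀ A ∈ 𝒜, (∀ v ∈ K, A v ∈ K) ∧ (∀ v ∈ K, star A v ∈ K) := by
      intro A hA
      induction hA using NonUnitalStarAlgebra.adjoin_induction with
      | mem T hT => obtain ⟨i, rfl⟩ := hT; exact ⟨hTK i, hTsK i⟩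
      | add A B hA hB ihA ihB =>
        refine ⟨fun v hv => ?_, fun v hv => ?_⟩
        · rw [ContinuousLinearMap.add_apply]; exact add_mem (ihA.1 v hv) (ihB.1 v hv)
        · rw [star_add, ContinuousLinearMap.add_apply]
          exact add_mem (ihA.2 v hv) (ihB.2 v hv)
      | zero => exact ⟨fun v hv => by simp [zero_mem], fun v hv => by simp [zero_mem]⟩
      | mul A B hA hB ihA ihB =>
        refine ⟨fun v hv => ?_, fun v hv => ?_⟩
        · rw [ContinuousLinearMap.mul_apply]; exact ihA.1 _ (ihB.1 v hv)
        · rw [star_mul, ContinuousLinearMap.mul_apply]; exact ihB.2 _ (ihA.2 v hv)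
      | smul c A hA ih =>
        refine ⟨fun v hv => ?_, fun v hv => ?_⟩
        · rw [ContinuousLinearMap.smul_apply]; exact Submodule.smul_mem K c (ih.1 v hv)
        · rw [star_smul, ContinuousLinearMap.smul_apply]
          exact Submodule.smul_mem K _ (ih.2 v hv)
      | star A hA ih =>
        exact ⟨ih.2, fun v hv => by rw [star_star]; exact ih.1 v hv⟩
    have hbxK : b x ∈ K := hbK x (orbEquiv_refl' f x)
    have himgK : (fun A : H →L[ℂ] H => A (b x)) '' CstarGen (Set.range Ts) ⊆ (K : Set H) := by
      rintro _ ⟨A, hA, rfl⟩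
      have h3 : A (b x) ∈ closure (K : Set H) :=
        map_mem_closure (f := fun B : H →L[ℂ] H => B (b x)) (hev (b x)) hA
          fun B hB => (halg B hB).1 _ hbxK
      rwa [hKclosed.closure_eq] at h3
    have hKuniv : ∀ v : H, v ∈ K := by
      intro v
      have h1 : v ∈ closure ((fun A : H →L[ℂ] H => A (b x)) '' CstarGen (Set.range Ts)) :=
        hx ▸ Set.mem_univ v
      exact (hKclosed.closure_subset_iff.mpr himgK) h1
    have hall : ∀ y : X, orbEquiv f x y := by
      intro y
      by_contra hy
      have hyC : y ∉ C := hy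
      set φ := innerSL ℂ (b y) with hφ
      have h0 : ∀ v ∈ Submodule.span ℂ (b '' C), φ v = 0 := by
        intro v hv
        induction hv using Submodule.span_induction with
        | mem w hw =>
          obtain ⟨z, hz, rfl⟩ := hw
          have hne : y ≠ z := fun h => hyC (h ▸ hz)
          rw [hφ]; simp only [innerSL_apply_apply]
          rw [hinner]; simp [hne]
        | zero => simp
        | add w₁ w₂ _ _ ih₁ ih₂ => rw [map_add, ih₁, ih₂, add_zero]
        | smul c w _ ih => rw [map_smul, ih, smul_zero]
      have h1 : φ (b y) ∈ closure ({0} : Set ℂ) := by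
        have h2 : b y ∈ closure (Submodule.span ℂ (b '' C) : Set H) := hKuniv (b y)
        exact map_mem_closure φ.continuous h2 fun w hw => h0 w hw
      rw [closure_singleton] at h1
      have h3 : φ (b y) = (1 : ℂ) := by
        rw [hφ]; simp only [innerSL_apply_apply]; rw [hinner]; simp
      rw [h3] at h1
      exact one_ne_zero (Set.mem_singleton_iff.mp h1)
    intro y z
    exact orbEquiv_trans' (orbEquiv_symm' (hall y)) (hall z)
  · -- backward direction
    intro hall
    have hX : Nonempty X := inferInstance
    set x := Classical.arbitrary X with hxdef
    refine ⟨x, ?_⟩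
    have key : ∀ (n : ℕ) (y : X) (m : ℕ), f^[m + 1] x = f^[n] y →
        ∃ A ∈ 𝒜, A (b x) = b y := by
      intro n
      induction n with
      | zero =>
        intro y m h
        exact ⟨S ^ (m + 1), hSpowmem m, by
          rw [hSpow (m + 1) x, h, Function.iterate_zero_apply]⟩
      | succ n ih =>
        intro y m h
        obtain ⟨A, hA, hAx⟩ := ih (f y) m (by rw [h, Function.iterate_succ_apply])
        obtain ⟨i, hi⟩ := hmem y
        refine ⟨star (Ts i) * A, mul_mem (star_mem (hgen i)) hA, ?_⟩
        rw [ContinuousLinearMap.mul_apply, hAx, hadj i y hi]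
    have hset : ∀ y : X, b y ∈ (fun A : H →L[ℂ] H => A (b x)) '' ↑𝒜 := by
      intro y
      obtain ⟨w, ⟨m, hm⟩, ⟨n, hn⟩⟩ := hall x y
      simp only at hm hn
      obtain ⟨A, hA, hAx⟩ := key (n + 1) y m (by
        rw [Function.iterate_succ_apply', Function.iterate_succ_apply', hm, hn])
      exact ⟨A, hA, hAx⟩
    have himg : closure ((fun A : H →L[ℂ] H => A (b x)) '' CstarGen (Set.range Ts))
        = closure ((fun A : H →L[ℂ] H => A (b x)) '' ↑𝒜) := by
      apply Set.Subset.antisymm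
      · apply closure_minimal _ isClosed_closure
        rintro _ ⟨A, hA, rfl⟩
        exact map_mem_closure (f := fun B : H →L[ℂ] H => B (b x)) (hev (b x)) hA
          fun B hB => Set.mem_image_of_mem _ hB
      · exact closure_mono (Set.image_mono subset_closure)
    rw [himg]
    set M : Submodule ℂ H :=
      { carrier := (fun A : H →L[ℂ] H => A (b x)) '' ↑𝒜
        add_mem' := by
          rintro _ _ ⟨A, hA, rfl⟩ ⟨B, hB, rfl⟩
          exact ⟨A + B, add_mem hA hB, by simp⟩
        zero_mem' := ⟨0, zero_mem _, rfl⟩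
        smul_mem' := by
          rintro c _ ⟨A, hA, rfl⟩
          exact ⟨c • A, SMulMemClass.smul_mem c hA, by simp⟩ } with hM
    have hspanle : Submodule.span ℂ (Set.range ⇑b) ≤ M :=
      Submodule.span_le.mpr (by rintro _ ⟨y, rfl⟩; exact hset y)
    apply Set.eq_univ_of_univ_subset
    intro v _
    have hv : v ∈ closure (Submodule.span ℂ (Set.range ⇑b) : Set H) := by
      have : v ∈ (Submodule.span ℂ (Set.range ⇑b)).topologicalClosure := by
        rw [b.dense_span]; exact Submodule.mem_top
      exact this
    exact closure_mono (fun w hw => hspanle hw) hv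
end

section
/- Let X be a countably infinite set and f : X → X a map satisfying the bounded condition with partition X = X_1 ⊔ ⋯ ⊔ X_k, let H be a complex Hilbert space with orthonormal basis {e_x}_{x∈X}, and for 1 ≤ i ≤ k let T_i be the bounded operator with T_i e_x = e_{f(x)} if x ∈ X_i and T_i e_x = 0 otherwise. Assume f satisfies the separating condition for some x ∈ X. If y ~ z for every y, z ∈ X (with ~ the orbit equivalence relation induced by f), then C*(T_1,…,T_k) has no non-trivial reducing subspaces. -/
/-- `f` satisfies the separating condition for `x` (w.r.t. the partition `Xp`): `x` is
periodic, and for the minimal period `n`, the `n`-tuple recording which piece of the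
partition each of `x, f(x), …, f^[n-1](x)` lies in is aperiodic, i.e. differs from every
non-trivial cyclic rotation of itself. -/
def SeparatingCondition {X : Type*} {k : ℕ} (f : X → X) (Xp : Fin k → Set X) (x : X) :
    Prop :=
  ∃ n : ℕ, 0 < n ∧ f^[n] x = x ∧ (∀ m : ℕ, 0 < m → m < n → f^[m] x ≠ x) ∧
    ∀ idx : ℕ → Fin k, (∀ j : ℕ, j < n → f^[j] x ∈ Xp (idx j)) →
      ∀ r : ℕ, 0 < r → r < n → ∃ j : ℕ, j < n ∧ idx ((j + r) % n) ≠ idx j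

open Function ContinuousLinearMap

local notation "⟪" x ", " y "⟫" => @inner ℂ _ _ x y

set_option linter.unusedSectionVars false

section Aux

variable {X : Type*} {k : ℕ} {H : Type*} [NormedAddCommGroup H] [InnerProductSpace ℂ H]
  [CompleteSpace H]

/-- The word of operators along the itinerary of `y`. -/
noncomputable def Wd (f : X → X) (ind : X → Fin k) (Ts : Fin k → H →L[ℂ] H) (y : X) :
    ℕ → (H →L[ℂ] H)
  | 0 => ContinuousLinearMap.id ℂ H
  | N + 1 => Ts (ind (f^[N] y)) ∘L Wd f ind Ts y N

variable {f : X → X} {Xp : Fin k → Set X} {ind : X → Fin k} {Ts : Fin k → H →L[ℂ] H}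
  {b : HilbertBasis X ℂ H}

lemma basis_ext {u v : H} (h : ∀ a : X, ⟪b a, u⟫ = ⟪b a, v⟫) : u = v := by
  apply b.repr.injective
  apply lp.ext
  funext a
  rw [show (b.repr u : ∀ _ : X, ℂ) a = b.repr u a from rfl,
    show (b.repr v : ∀ _ : X, ℂ) a = b.repr v a from rfl,
    b.repr_apply_apply, b.repr_apply_apply]
  exact h a

lemma inner_bb [DecidableEq X] (a z : X) : ⟪b a, b z⟫ = if a = z then 1 else 0 :=
  orthonormal_iff_ite.mp b.orthonormal a z

lemma Wd_apply (hind : ∀ z, z ∈ Xp (ind z))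
    (hTs : ∀ i (x : X), (x ∈ Xp i → Ts i (b x) = b (f x)) ∧ (x ∉ Xp i → Ts i (b x) = 0))
    (y : X) :
    ∀ N (z : X), (∀ j < N, ind (f^[j] z) = ind (f^[j] y)) →
      Wd f ind Ts y N (b z) = b (f^[N] z) := by
  intro N
  induction N with
  | zero => intro z _; simp [Wd]
  | succ N ih =>
      intro z h
      have h1 : Wd f ind Ts y (N + 1) (b z)
          = Ts (ind (f^[N] y)) (Wd f ind Ts y N (b z)) := rfl
      rw [h1, ih z (fun j hj => h j (Nat.lt_succ_of_lt hj)),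
        (hTs (ind (f^[N] y)) (f^[N] z)).1 (by rw [← h N (Nat.lt_succ_self N)]; exact hind _),
        ← Function.iterate_succ_apply' f N z]

lemma Wd_apply_zero (hind : ∀ z, z ∈ Xp (ind z))
    (huniq : ∀ z i, z ∈ Xp i → ind z = i)
    (hTs : ∀ i (x : X), (x ∈ Xp i → Ts i (b x) = b (f x)) ∧ (x ∉ Xp i → Ts i (b x) = 0))
    (y : X) :
    ∀ N (z : X), (∃ j < N, ind (f^[j] z) ≠ ind (f^[j] y)) →
      Wd f ind Ts y N (b z) = 0 := by
  intro N
  induction N with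
  | zero => rintro z ⟨j, hj, _⟩; exact absurd hj (Nat.not_lt_zero j)
  | succ N ih =>
      intro z h
      have h1 : Wd f ind Ts y (N + 1) (b z)
          = Ts (ind (f^[N] y)) (Wd f ind Ts y N (b z)) := rfl
      by_cases hall : ∀ j < N, ind (f^[j] z) = ind (f^[j] y)
      · obtain ⟨j, hj, hne⟩ := h
        have hjN : j = N := by
          rcases Nat.lt_succ_iff_lt_or_eq.mp hj with h' | h'
          · exact absurd (hall j h') hne
          · exact h'
        rw [h1, Wd_apply hind hTs y N z hall,
          (hTs (ind (f^[N] y)) (f^[N] z)).2 (fun hmem => (hjN ▸ hne) (huniq _ _ hmem))]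
      · push_neg at hall
        obtain ⟨j, hj, hne⟩ := hall
        rw [h1, ih z ⟨j, hj, hne⟩, map_zero]

lemma itinerary_inj (hind : ∀ z, z ∈ Xp (ind z)) (hinj : ∀ i, Set.InjOn f (Xp i)) (y : X) :
    ∀ N (z z' : X), (∀ j < N, ind (f^[j] z) = ind (f^[j] y)) →
      (∀ j < N, ind (f^[j] z') = ind (f^[j] y)) → f^[N] z = f^[N] z' → z = z' := by
  intro N
  induction N with
  | zero => intro z z' _ _ h; exact h
  | succ N ih =>
      intro z z' hz hz' hN
      refine ih z z' (fun j hj => hz j (Nat.lt_succ_of_lt hj))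
        (fun j hj => hz' j (Nat.lt_succ_of_lt hj)) ?_
      have m1 : f^[N] z ∈ Xp (ind (f^[N] y)) := by
        rw [← hz N (Nat.lt_succ_self N)]; exact hind _
      have m2 : f^[N] z' ∈ Xp (ind (f^[N] y)) := by
        rw [← hz' N (Nat.lt_succ_self N)]; exact hind _
      refine hinj (ind (f^[N] y)) m1 m2 ?_
      rw [← Function.iterate_succ_apply' f N z, ← Function.iterate_succ_apply' f N z']
      exact hN


lemma Wd_adjoint (hind : ∀ z, z ∈ Xp (ind z))
    (huniq : ∀ z i, z ∈ Xp i → ind z = i) (hinj : ∀ i, Set.InjOn f (Xp i))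
    (hTs : ∀ i (x : X), (x ∈ Xp i → Ts i (b x) = b (f x)) ∧ (x ∉ Xp i → Ts i (b x) = 0))
    (y : X) (N : ℕ) (z : X) (hz : ∀ j < N, ind (f^[j] z) = ind (f^[j] y)) :
    adjoint (Wd f ind Ts y N) (b (f^[N] z)) = b z := by
  classical
  apply basis_ext (b := b)
  intro a
  rw [adjoint_inner_right]
  by_cases hall : ∀ j < N, ind (f^[j] a) = ind (f^[j] y)
  · rw [Wd_apply hind hTs y N a hall, inner_bb, inner_bb]
    refine if_congr ⟨fun h => itinerary_inj hind hinj y N a z hall hz h,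
      fun h => by rw [h]⟩ rfl rfl
  · push_neg at hall
    obtain ⟨j, hj, hne⟩ := hall
    rw [Wd_apply_zero hind huniq hTs y N a ⟨j, hj, hne⟩, inner_zero_left, inner_bb,
      if_neg (fun h => hne (by rw [h]; exact hz j hj))]

/-- The diagonal projection onto basis vectors matching the itinerary of `y` up to `N`. -/
noncomputable def AOp (f : X → X) (ind : X → Fin k) (Ts : Fin k → H →L[ℂ] H) (y : X)
    (N : ℕ) : H →L[ℂ] H :=
  adjoint (Wd f ind Ts y N) ∘L Wd f ind Ts y N

lemma AOp_adjoint (y : X) (N : ℕ) :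
    adjoint (AOp f ind Ts y N) = AOp f ind Ts y N := by
  rw [AOp, adjoint_comp, adjoint_adjoint]

lemma AOp_apply_match (hind : ∀ z, z ∈ Xp (ind z))
    (huniq : ∀ z i, z ∈ Xp i → ind z = i) (hinj : ∀ i, Set.InjOn f (Xp i))
    (hTs : ∀ i (x : X), (x ∈ Xp i → Ts i (b x) = b (f x)) ∧ (x ∉ Xp i → Ts i (b x) = 0))
    (y : X) (N : ℕ) (z : X) (hz : ∀ j < N, ind (f^[j] z) = ind (f^[j] y)) :
    AOp f ind Ts y N (b z) = b z := by
  rw [AOp, ContinuousLinearMap.comp_apply, Wd_apply hind hTs y N z hz,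
    Wd_adjoint hind huniq hinj hTs y N z hz]

lemma AOp_apply_nomatch (hind : ∀ z, z ∈ Xp (ind z))
    (huniq : ∀ z i, z ∈ Xp i → ind z = i)
    (hTs : ∀ i (x : X), (x ∈ Xp i → Ts i (b x) = b (f x)) ∧ (x ∉ Xp i → Ts i (b x) = 0))
    (y : X) (N : ℕ) (z : X) (hz : ∃ j < N, ind (f^[j] z) ≠ ind (f^[j] y)) :
    AOp f ind Ts y N (b z) = 0 := by
  rw [AOp, ContinuousLinearMap.comp_apply, Wd_apply_zero hind huniq hTs y N z hz, map_zero]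

lemma AOp_inner (y : X) (N : ℕ) (a : X) (u : H) :
    ⟪b a, AOp f ind Ts y N u⟫ = ⟪AOp f ind Ts y N (b a), u⟫ := by
  conv_rhs => rw [← AOp_adjoint (Ts := Ts) y N]
  rw [adjoint_inner_left]

lemma AOp_idem (hind : ∀ z, z ∈ Xp (ind z))
    (huniq : ∀ z i, z ∈ Xp i → ind z = i) (hinj : ∀ i, Set.InjOn f (Xp i))
    (hTs : ∀ i (x : X), (x ∈ Xp i → Ts i (b x) = b (f x)) ∧ (x ∉ Xp i → Ts i (b x) = 0))
    (y : X) (N : ℕ) (u : H) :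
    AOp f ind Ts y N (AOp f ind Ts y N u) = AOp f ind Ts y N u := by
  classical
  apply basis_ext (b := b)
  intro a
  rw [AOp_inner, AOp_inner]
  by_cases hall : ∀ j < N, ind (f^[j] a) = ind (f^[j] y)
  · rw [AOp_apply_match hind huniq hinj hTs y N a hall, AOp_inner]
    rw [AOp_apply_match hind huniq hinj hTs y N a hall]
  · push_neg at hall
    obtain ⟨j, hj, hne⟩ := hall
    rw [AOp_apply_nomatch hind huniq hTs y N a ⟨j, hj, hne⟩, inner_zero_left, inner_zero_left]

lemma AOp_norm_le (hind : ∀ z, z ∈ Xp (ind z))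
    (huniq : ∀ z i, z ∈ Xp i → ind z = i) (hinj : ∀ i, Set.InjOn f (Xp i))
    (hTs : ∀ i (x : X), (x ∈ Xp i → Ts i (b x) = b (f x)) ∧ (x ∉ Xp i → Ts i (b x) = 0))
    (y : X) (N : ℕ) (u : H) : ‖AOp f ind Ts y N u‖ ≤ ‖u‖ := by
  have h1 : ⟪AOp f ind Ts y N u, AOp f ind Ts y N u⟫ = ⟪u, AOp f ind Ts y N u⟫ := by
    calc ⟪AOp f ind Ts y N u, AOp f ind Ts y N u⟫
        = ⟪adjoint (AOp f ind Ts y N) u, AOp f ind Ts y N u⟫ := by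
          rw [AOp_adjoint (Ts := Ts) y N]
      _ = ⟪u, AOp f ind Ts y N (AOp f ind Ts y N u)⟫ := adjoint_inner_left _ _ _
      _ = ⟪u, AOp f ind Ts y N u⟫ := by rw [AOp_idem hind huniq hinj hTs y N u]
  have h2 : ‖AOp f ind Ts y N u‖ ^ 2 ≤ ‖u‖ * ‖AOp f ind Ts y N u‖ := by
    rw [← inner_self_eq_norm_sq (𝕜 := ℂ), h1]
    exact le_trans (RCLike.re_le_norm _) (norm_inner_le_norm _ _)
  rcases eq_or_lt_of_le (norm_nonneg (AOp f ind Ts y N u)) with h | h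
  · rw [← h]; exact norm_nonneg u
  · nlinarith [h2]
end Aux

/-- For a map `f` satisfying the bounded condition and the separating condition for some
point, if all points of `X` are orbit equivalent then `C*(T₁,…,T_k)` has no non-trivial
reducing subspaces. -/
theorem irreducible_general_of_orbit_equiv {X : Type*} [Countable X] [Infinite X]
    (f : X → X) (k : ℕ) (Xp : Fin k → Set X)
    (hdisj : ∀ i j, i ≠ j → Disjoint (Xp i) (Xp j))
    (hcover : (⋃ i, Xp i) = Set.univ)
    (hinj : ∀ i, Set.InjOn f (Xp i))
    {H : Type*} [NormedAddCommGroup H] [InnerProductSpace ℂ H] [CompleteSpace H]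
    (b : HilbertBasis X ℂ H)
    (Ts : Fin k → H →L[ℂ] H)
    (hTs : ∀ i (x : X), (x ∈ Xp i → Ts i (b x) = b (f x)) ∧ (x ∉ Xp i → Ts i (b x) = 0))
    (hsep : ∃ x : X, SeparatingCondition f Xp x)
    (horb : ∀ y z : X, orbEquiv f y z) :
    ∀ M : Submodule ℂ H, IsClosed (M : Set H) →
      (∀ A ∈ CstarGen (Set.range Ts), ∀ v ∈ M, A v ∈ M ∧ ContinuousLinearMap.adjoint A v ∈ M) →
      M = ⊥ ∨ M = ⊤ := by
  intro M hMclosed hMA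
  classical
  -- the index function
  have hex : ∀ z : X, ∃ i, z ∈ Xp i := fun z =>
    Set.mem_iUnion.mp (hcover ▸ Set.mem_univ z)
  choose ind hind using hex
  have huniq : ∀ z i, z ∈ Xp i → ind z = i := by
    intro z i hz
    by_contra hne
    exact Set.disjoint_left.mp (hdisj _ _ hne) (hind z) hz
  -- generators are in the C*-algebra
  have hgen : ∀ i : Fin k, Ts i ∈ CstarGen (Set.range Ts) := fun i =>
    subset_closure (NonUnitalStarAlgebra.subset_adjoin ℂ (Set.range Ts) ⟨i, rfl⟩)
  -- the separating point
  obtain ⟨x₀, n, hn, hper, -, haper⟩ := hsep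
  have hper' : ∀ t, f^[n * t] x₀ = x₀ := by
    intro t
    induction t with
    | zero => simp
    | succ t ih => rw [Nat.mul_succ, Function.iterate_add_apply, hper, ih]
  have hmod : ∀ q, f^[q] x₀ = f^[q % n] x₀ := by
    intro q
    conv_lhs => rw [← Nat.mod_add_div q n]
    rw [Function.iterate_add_apply, hper']
  -- points matching the full itinerary of x₀ equal x₀
  have key2 : ∀ z : X, (∀ j, ind (f^[j] z) = ind (f^[j] x₀)) → z = x₀ := by
    intro z hz
    obtain ⟨p, ⟨a, ha⟩, ⟨e, he⟩⟩ := horb z x₀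
    simp only at ha he
    have hme : (n * (e + 1) - e) + e = n * (e + 1) := by
      have h1 : e + 1 ≤ n * (e + 1) := Nat.le_mul_of_pos_left _ hn
      omega
    set N := (n * (e + 1) - e) + a with hNdef
    have hNz : f^[N] z = x₀ := by
      rw [hNdef, Function.iterate_add_apply, ha, ← he, ← Function.iterate_add_apply, hme,
        hper']
    have hdvd : N % n = 0 := by
      by_contra hr
      obtain ⟨j, hj, hne⟩ := haper (fun j => ind (f^[j] x₀)) (fun j _ => hind _) (N % n)
        (Nat.pos_of_ne_zero hr) (Nat.mod_lt _ hn)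
      apply hne
      have hsplit := Nat.div_add_mod N n
      have hjN : j + N = (j + N % n) + n * (N / n) := by omega
      have hmm : (j + N % n) % n = (j + N) % n := by
        rw [hjN, Nat.add_mul_mod_self_left]
      have e1 : f^[j + N] x₀ = f^[(j + N % n) % n] x₀ := by
        rw [hmod (j + N), ← hmm]
      calc ind (f^[(j + N % n) % n] x₀) = ind (f^[j + N] x₀) := by rw [e1]
        _ = ind (f^[j + N] z) := (hz (j + N)).symm
        _ = ind (f^[j] x₀) := by rw [Function.iterate_add_apply, hNz]
    have hxN : f^[N] x₀ = x₀ := by rw [hmod, hdvd]; rfl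
    exact itinerary_inj hind hinj x₀ N z x₀ (fun j _ => hz j) (fun j _ => rfl)
      (by rw [hNz, hxN])
  -- KEY: every nonzero invariant closed subspace contains b x₀
  have key : ∀ M' : Submodule ℂ H, IsClosed (M' : Set H) →
      (∀ i : Fin k, ∀ v ∈ M', Ts i v ∈ M' ∧ ContinuousLinearMap.adjoint (Ts i) v ∈ M') →
      M' ≠ ⊥ → b x₀ ∈ M' := by
    intro M' hclosed hinv hne
    obtain ⟨v, hvM, hv0⟩ := Submodule.exists_mem_ne_zero_of_ne_bot hne
    have : ∃ y, ⟪b y, v⟫ ≠ 0 := by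
      by_contra hco
      push_neg at hco
      apply hv0
      have h0 : b.repr v = 0 := by
        apply lp.ext
        funext y
        have : b.repr v y = 0 := by rw [b.repr_apply_apply]; exact hco y
        simpa using this
      exact b.repr.map_eq_zero_iff.mp h0
    obtain ⟨y, hy⟩ := this
    -- membership lemmas for words
    have hWmem : ∀ (y' : X) (N' : ℕ) (u : H), u ∈ M' → Wd f ind Ts y' N' u ∈ M' := by
      intro y' N'
      induction N' with
      | zero => intro u hu; exact hu
      | succ N' ih => intro u hu; exact (hinv _ _ (ih u hu)).1
    have hWadjmem : ∀ (y' : X) (N' : ℕ) (u : H), u ∈ M' →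
        ContinuousLinearMap.adjoint (Wd f ind Ts y' N') u ∈ M' := by
      intro y' N'
      induction N' with
      | zero =>
          intro u hu
          simpa only [Wd, adjoint_id, ContinuousLinearMap.id_apply] using hu
      | succ N' ih =>
          intro u hu
          have hC : ContinuousLinearMap.adjoint (Wd f ind Ts y' (N' + 1))
              = ContinuousLinearMap.adjoint (Wd f ind Ts y' N') ∘L
                ContinuousLinearMap.adjoint (Ts (ind (f^[N'] y'))) := by
            rw [show Wd f ind Ts y' (N' + 1) = Ts (ind (f^[N'] y')) ∘L Wd f ind Ts y' N'
              from rfl, adjoint_comp]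
          rw [hC, ContinuousLinearMap.comp_apply]
          exact ih _ ((hinv _ _ hu).2)
    -- transport the nonzero coefficient to x₀
    obtain ⟨p, ⟨a, ha⟩, ⟨e, he⟩⟩ := horb y x₀
    simp only at ha he
    have hme : (n * (e + 1) - e) + e = n * (e + 1) := by
      have h1 : e + 1 ≤ n * (e + 1) := Nat.le_mul_of_pos_left _ hn
      omega
    set N := (n * (e + 1) - e) + a with hNdef
    have hNy : f^[N] y = x₀ := by
      rw [hNdef, Function.iterate_add_apply, ha, ← he, ← Function.iterate_add_apply, hme,
        hper']
    set w := Wd f ind Ts y N v with hwdef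
    have hwM : w ∈ M' := hWmem y N v hvM
    have hcw : ⟪b x₀, w⟫ = ⟪b y, v⟫ := by
      rw [← hNy, hwdef, ← adjoint_inner_left,
        Wd_adjoint hind huniq hinj hTs y N y (fun j _ => rfl)]
    set c := ⟪b x₀, w⟫ with hcdef
    have hc : c ≠ 0 := by rw [hcw]; exact hy
    set w' := w - c • b x₀ with hw'
    have hcoef0 : ⟪b x₀, w'⟫ = 0 := by
      rw [hw', inner_sub_right, inner_smul_right]
      have hbb : ⟪b x₀, b x₀⟫ = 1 := by rw [inner_bb]; simp
      rw [hbb, mul_one, sub_self]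
    have htend : Filter.Tendsto (fun N' => AOp f ind Ts x₀ N' w') Filter.atTop (nhds 0) := by
      rw [Metric.tendsto_atTop]
      intro ε hε
      have hsum := b.hasSum_repr w'
      have hev := Metric.tendsto_nhds.mp hsum ε hε
      rw [SummationFilter.unconditional_filter, Filter.eventually_atTop] at hev
      obtain ⟨F, hF⟩ := hev
      have hJ : ∀ z : X, ∃ j, z ≠ x₀ → ind (f^[j] z) ≠ ind (f^[j] x₀) := by
        intro z
        by_cases hzx : z = x₀
        · exact ⟨0, fun h => absurd hzx h⟩
        · have h1 : ¬(∀ j, ind (f^[j] z) = ind (f^[j] x₀)) := fun h => hzx (key2 z h)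
          push_neg at h1
          obtain ⟨j, hj⟩ := h1
          exact ⟨j, fun _ => hj⟩
      choose J hJ using hJ
      refine ⟨F.sup J + 1, fun N' hN' => ?_⟩
      have hAsum : AOp f ind Ts x₀ N' (∑ z ∈ F, b.repr w' z • b z) = 0 := by
        rw [map_sum]
        refine Finset.sum_eq_zero fun z hzF => ?_
        rw [map_smul]
        by_cases hzx : z = x₀
        · subst hzx
          rw [b.repr_apply_apply, hcoef0, zero_smul]
        · rw [AOp_apply_nomatch hind huniq hTs x₀ N' z
            ⟨J z, Nat.lt_of_lt_of_le (Nat.lt_succ_of_le (Finset.le_sup hzF)) hN',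
              hJ z hzx⟩, smul_zero]
      have hsplit : AOp f ind Ts x₀ N' w'
          = AOp f ind Ts x₀ N' (w' - ∑ z ∈ F, b.repr w' z • b z) := by
        conv_rhs => rw [map_sub]
        rw [hAsum, sub_zero]
      rw [dist_eq_norm, sub_zero, hsplit]
      calc ‖AOp f ind Ts x₀ N' (w' - ∑ z ∈ F, b.repr w' z • b z)‖
          ≤ ‖w' - ∑ z ∈ F, b.repr w' z • b z‖ := AOp_norm_le hind huniq hinj hTs x₀ N' _
        _ = dist (∑ z ∈ F, b.repr w' z • b z) w' := by rw [dist_eq_norm, norm_sub_rev]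
        _ < ε := hF F le_rfl
    have htendw : Filter.Tendsto (fun N' => AOp f ind Ts x₀ N' w) Filter.atTop
        (nhds (c • b x₀)) := by
      have heq : ∀ N', AOp f ind Ts x₀ N' w = AOp f ind Ts x₀ N' w' + c • b x₀ := by
        intro N'
        rw [hw', map_sub, map_smul,
          AOp_apply_match hind huniq hinj hTs x₀ N' x₀ (fun _ _ => rfl), sub_add_cancel]
      simp only [heq]
      simpa using htend.add_const (c • b x₀)
    have hmem : c • b x₀ ∈ M' := by
      refine hclosed.mem_of_tendsto htendw (Filter.Eventually.of_forall fun N' => ?_)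
      show AOp f ind Ts x₀ N' w ∈ M'
      rw [AOp, ContinuousLinearMap.comp_apply]
      exact hWadjmem _ _ _ (hWmem _ _ _ hwM)
    have hfin := M'.smul_mem c⁻¹ hmem
    rwa [smul_smul, inv_mul_cancel₀ hc, one_smul] at hfin
  -- endgame
  by_cases hbot : M = ⊥
  · exact Or.inl hbot
  · right
    by_contra htop
    have hM1 : ∀ i : Fin k, ∀ v ∈ M, Ts i v ∈ M ∧ ContinuousLinearMap.adjoint (Ts i) v ∈ M :=
      fun i v hv => hMA (Ts i) (hgen i) v hv
    have hb1 : b x₀ ∈ M := key M hMclosed hM1 hbot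
    haveI : CompleteSpace M := hMclosed.completeSpace_coe
    have horthne : Mᗮ ≠ ⊥ := fun h0 => htop (Submodule.orthogonal_eq_bot_iff.mp h0)
    have hM1o : ∀ i : Fin k, ∀ v ∈ Mᗮ,
        Ts i v ∈ Mᗮ ∧ ContinuousLinearMap.adjoint (Ts i) v ∈ Mᗮ := by
      intro i v hv
      constructor
      · rw [Submodule.mem_orthogonal]
        intro u hu
        rw [← adjoint_inner_left]
        exact (Submodule.mem_orthogonal _ _).mp hv _ ((hM1 i u hu).2)
      · rw [Submodule.mem_orthogonal]
        intro u hu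
        rw [adjoint_inner_right]
        exact (Submodule.mem_orthogonal _ _).mp hv _ ((hM1 i u hu).1)
    have hb2 : b x₀ ∈ Mᗮ := key Mᗮ M.isClosed_orthogonal hM1o horthne
    have h0 : ⟪b x₀, b x₀⟫ = 0 := (Submodule.mem_orthogonal _ _).mp hb2 _ hb1
    have hb0 : b x₀ = (0 : H) := inner_self_eq_zero.mp h0
    have h1 := b.orthonormal.1 x₀
    rw [hb0, norm_zero] at h1
    exact one_ne_zero h1.symm
end

section
/- Let X be a set, f : X → X a map, Σ ⊆ X a nonempty subset, and P the first-return map of f on Σ, assumed to be defined on all of Σ. Then: (a) if orb(x;f) ∩ Σ ≠ ∅ for every x ∈ X and x ~ y by P for every x, y ∈ Σ, then x ~ y by f for every x, y ∈ X; and (b) if there exists a periodic point x ∈ Σ of f with orb(x;P) = orb(x;f) ∩ Σ, and y ~ z by f for every y, z ∈ X, then y ~ z by P for every y, z ∈ Σ. -/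
/-- Each `P`-iterate of a point of `S` is an `f`-iterate of it and lies in `S`. -/
lemma P_iter_eq_f_iter {X : Type*} {f : X → X} {S : Set X} {P : X → X}
    (hP : ∀ x ∈ S, IsFirstReturn f S x (P x)) :
    ∀ n : ℕ, ∀ y ∈ S, ∃ m : ℕ, P^[n] y = f^[m] y ∧ P^[n] y ∈ S := by
  intro n
  induction n with
  | zero => intro y hy; exact ⟨0, rfl, hy⟩
  | succ n ih =>
    intro y hy
    obtain ⟨m, hm, hmS⟩ := ih y hy
    obtain ⟨k, hk0, hkS, hPy, -⟩ := hP _ hmS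
    have hsucc : P^[n + 1] y = P (P^[n] y) := Function.iterate_succ_apply' P n y
    refine ⟨k + m, ?_, ?_⟩
    · rw [hsucc, hPy, hm, ← Function.iterate_add_apply]
    · rw [hsucc, hPy, hm]
      rw [hm] at hkS
      exact hkS

/-- Every point of `orb(y;f) ∩ S` lies on the `P`-orbit of `y`, for `y ∈ S`. -/
lemma return_mem_orbit_P {X : Type*} {f : X → X} {S : Set X} {P : X → X}
    (hP : ∀ x ∈ S, IsFirstReturn f S x (P x)) :
    ∀ m : ℕ, ∀ y ∈ S, f^[m] y ∈ S → f^[m] y ∈ orbit P y := by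
  intro m
  induction m using Nat.strong_induction_on with
  | _ m ih =>
    intro y hy hm
    rcases Nat.eq_zero_or_pos m with h0 | hmpos
    · subst h0; exact ⟨0, rfl⟩
    obtain ⟨k, hk0, hkS, hPy, hmin⟩ := hP y hy
    have hkm : k ≤ m := by
      by_contra h
      exact hmin m hmpos (lt_of_not_ge h) hm
    have heq : f^[m] y = f^[m - k] (P y) := by
      rw [hPy, ← Function.iterate_add_apply, Nat.sub_add_cancel hkm]
    have hPyS : P y ∈ S := hPy ▸ hkS
    have : f^[m - k] (P y) ∈ orbit P (P y) :=
      ih (m - k) (by omega) (P y) hPyS (heq ▸ hm)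
    obtain ⟨n, hn⟩ := this
    beta_reduce at hn
    refine ⟨n + 1, ?_⟩
    show P^[n + 1] y = f^[m] y
    rw [Function.iterate_succ_apply, hn, heq]

/-- Transfer of orbit equivalence between a map `f` and its first-return map `P` on a
nonempty subset `Σ`: (a) if every `f`-orbit meets `Σ` and all points of `Σ` are
`P`-orbit-equivalent, then all points of `X` are `f`-orbit-equivalent; (b) if some
`f`-periodic point `x ∈ Σ` satisfies `orb(x;P) = orb(x;f) ∩ Σ` and all points of `X` are
`f`-orbit-equivalent, then all points of `Σ` are `P`-orbit-equivalent. -/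
theorem firstReturn_orbit_equiv_transfer {X : Type*} (f : X → X) (S : Set X)
    (hS : S.Nonempty) (P : X → X) (hP : ∀ x ∈ S, IsFirstReturn f S x (P x)) :
    ((∀ x : X, (orbit f x ∩ S).Nonempty) →
      (∀ x ∈ S, ∀ y ∈ S, orbEquiv P x y) →
      ∀ x y : X, orbEquiv f x y) ∧
    ((∃ x ∈ S, (∃ n : ℕ, 0 < n ∧ f^[n] x = x) ∧ orbit P x = orbit f x ∩ S) →
      (∀ y z : X, orbEquiv f y z) →
      ∀ y ∈ S, ∀ z ∈ S, orbEquiv P y z) := by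
  constructor
  · -- Part (a)
    intro h1 h2 x y
    obtain ⟨s, ⟨a, ha⟩, hsS⟩ := h1 x
    obtain ⟨t, ⟨b, hb⟩, htS⟩ := h1 y
    obtain ⟨w, ⟨i, hi⟩, ⟨j, hj⟩⟩ := h2 s hsS t htS
    beta_reduce at ha hb hi hj
    obtain ⟨mi, hmi, -⟩ := P_iter_eq_f_iter hP i s hsS
    obtain ⟨mj, hmj, -⟩ := P_iter_eq_f_iter hP j t htS
    refine ⟨w, ⟨mi + a, ?_⟩, ⟨mj + b, ?_⟩⟩
    · show f^[mi + a] x = w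
      rw [Function.iterate_add_apply, ha, ← hmi, hi]
    · show f^[mj + b] y = w
      rw [Function.iterate_add_apply, hb, ← hmj, hj]
  · -- Part (b)
    rintro ⟨x, hxS, ⟨n, hn0, hnx⟩, -⟩ hall y hyS z hzS
    -- x lies in the f-orbit of every point
    have key : ∀ w : X, x ∈ orbit f w := by
      intro w
      obtain ⟨v, ⟨a, ha⟩, ⟨b, hb⟩⟩ := hall w x
      beta_reduce at ha hb
      refine ⟨b * (n - 1) + a, ?_⟩
      show f^[b * (n - 1) + a] w = x
      have : f^[b * (n - 1)] (f^[b] x) = x := by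
        rw [← Function.iterate_add_apply]
        have hbn : b * (n - 1) + b = n * b := by
          rcases n with _ | n
          · omega
          · rw [Nat.succ_sub_one]; ring
        rw [hbn, Function.iterate_mul]
        exact Function.iterate_fixed hnx b
      rw [Function.iterate_add_apply, ha, ← hb, this]
    have hxy : x ∈ orbit P y := by
      obtain ⟨m, hm⟩ := key y
      beta_reduce at hm
      have : f^[m] y ∈ S := by rw [hm]; exact hxS
      have h := return_mem_orbit_P hP m y hyS this
      rwa [hm] at h
    have hxz : x ∈ orbit P z := by
      obtain ⟨m, hm⟩ := key z
      beta_reduce at hm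
      have : f^[m] z ∈ S := by rw [hm]; exact hxS
      have h := return_mem_orbit_P hP m z hzS this
      rwa [hm] at h
    exact ⟨x, hxy, hxz⟩
end
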